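/- arXiv:2308.10346 — 5 statements merged into one kernel-verified Lean document; each statement's English description precedes it below -/
import Mathlib

section
/- Let d, p ≥ 1, let Ω ∈ ℝ^{p×p} be positive definite, let Q₂ ∈ ℝ^{p×d} be such that H := Q₂ᵀΩ⁻¹Q₂ is positive definite, let c̃ ∈ ℝ^d, t ∈ ℝ^p, θ ∈ ℝ, ν > 0. Set Q̃₁ = −Q₂c̃, k = Q₂ᵀΩ⁻¹t, σ² = (ν⁻¹ + c̃ᵀHc̃)⁻¹, Σ_b = H⁻¹ + ν c̃c̃ᵀ, μ_b = Σ_b(−k + σ²Hc̃(ν⁻¹θ + c̃ᵀk)), and for b ∈ ℝ^d set μ_θ̂(b) = σ²(ν⁻¹θ + c̃ᵀk + c̃ᵀHb). Then Σ_b is positive definite and there exists a constant C > 0, not depending on θ̂ or b, such that for all θ̂ ∈ ℝ and all b ∈ ℝ^d: φ(θ̂; θ, ν) · φ(Q̃₁θ̂ + Q₂b + t; 0, Ω) = C · φ(θ̂; μ_θ̂(b), σ²) · φ(b; μ_b, Σ_b). -/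
open MeasureTheory Matrix Real

set_option maxHeartbeats 1000000

/-- Multivariate Gaussian density `φ(x; μ, S)` for covariance `S`. -/
noncomputable def mvGauss {d : ℕ} (S : Matrix (Fin d) (Fin d) ℝ) (μ x : Fin d → ℝ) : ℝ :=
  (2 * π) ^ (-(d : ℝ) / 2) * S.det ^ (-(1 : ℝ) / 2) *
    Real.exp (-(1 / 2) * ((x - μ) ⬝ᵥ (S⁻¹ *ᵥ (x - μ))))

/-- Univariate normal density `φ(x; m, s²)` with mean `m`, variance `s2`. -/
noncomputable def gauss1 (m s2 x : ℝ) : ℝ :=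
  (Real.sqrt (2 * π * s2))⁻¹ * Real.exp (-(x - m) ^ 2 / (2 * s2))

lemma mulVec_dot {m n : ℕ} (A : Matrix (Fin m) (Fin n) ℝ) (x : Fin n → ℝ) (y : Fin m → ℝ) :
    (A *ᵥ x) ⬝ᵥ y = x ⬝ᵥ (Aᵀ *ᵥ y) := by
  simp only [dotProduct, mulVec, transpose_apply, Finset.sum_mul, Finset.mul_sum, dotProduct]
  rw [Finset.sum_comm]
  exact Finset.sum_congr rfl fun i _ => Finset.sum_congr rfl fun j _ => by ring

lemma dot_symm {n : ℕ} (S : Matrix (Fin n) (Fin n) ℝ) (hS : Sᵀ = S) (x y : Fin n → ℝ) :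
    x ⬝ᵥ (S *ᵥ y) = y ⬝ᵥ (S *ᵥ x) := by
  rw [dotProduct_comm, mulVec_dot, hS]

lemma vmv_mulVec {n : ℕ} (a b x : Fin n → ℝ) : vecMulVec a b *ᵥ x = (b ⬝ᵥ x) • a := by
  funext i
  simp [mulVec, vecMulVec, dotProduct, Finset.mul_sum, Finset.sum_mul, mul_assoc, mul_comm,
    mul_left_comm]

lemma vmv_mul {n : ℕ} (a b : Fin n → ℝ) (M : Matrix (Fin n) (Fin n) ℝ) :
    vecMulVec a b * M = vecMulVec a (Mᵀ *ᵥ b) := by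
  ext i j
  simp [mul_apply, vecMulVec, mulVec, dotProduct, Finset.mul_sum, mul_assoc, mul_comm,
    mul_left_comm]

lemma mul_vmv {n : ℕ} (a b : Fin n → ℝ) (M : Matrix (Fin n) (Fin n) ℝ) :
    M * vecMulVec a b = vecMulVec (M *ᵥ a) b := by
  ext i j
  simp [mul_apply, vecMulVec, mulVec, dotProduct, Finset.sum_mul, mul_assoc]

lemma vmv_smul_left {n : ℕ} (a b : Fin n → ℝ) (r : ℝ) :
    vecMulVec (r • a) b = r • vecMulVec a b := by
  ext i j; simp [vecMulVec]; ring

lemma isHermitian_iff_symm {n : ℕ} (M : Matrix (Fin n) (Fin n) ℝ) : M.IsHermitian ↔ Mᵀ = M := by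
  constructor <;> intro h <;> simpa [Matrix.IsHermitian, conjTranspose_eq_transpose_of_trivial] using h

theorem stmt0 (d p : ℕ) (hd : 1 ≤ d) (hp : 1 ≤ p)
    (Ω : Matrix (Fin p) (Fin p) ℝ) (hΩ : Ω.PosDef)
    (Q₂ : Matrix (Fin p) (Fin d) ℝ)
    (H : Matrix (Fin d) (Fin d) ℝ) (hHdef : H = Q₂ᵀ * Ω⁻¹ * Q₂) (hH : H.PosDef)
    (c : Fin d → ℝ) (t : Fin p → ℝ) (θ ν : ℝ) (hν : 0 < ν)
    (k : Fin d → ℝ) (hk : k = (Q₂ᵀ * Ω⁻¹) *ᵥ t)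
    (σ2 : ℝ) (hσ2 : σ2 = (ν⁻¹ + c ⬝ᵥ (H *ᵥ c))⁻¹)
    (Sb : Matrix (Fin d) (Fin d) ℝ) (hSb : Sb = H⁻¹ + ν • vecMulVec c c)
    (μb : Fin d → ℝ)
    (hμb : μb = Sb *ᵥ (-k + (σ2 * (ν⁻¹ * θ + c ⬝ᵥ k)) • (H *ᵥ c)))
    (μθ : (Fin d → ℝ) → ℝ)
    (hμθ : ∀ b, μθ b = σ2 * (ν⁻¹ * θ + c ⬝ᵥ k + c ⬝ᵥ (H *ᵥ b))) :
    Sb.PosDef ∧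
      ∃ C : ℝ, 0 < C ∧ ∀ (θh : ℝ) (b : Fin d → ℝ),
        gauss1 θ ν θh * mvGauss Ω 0 (θh • (-(Q₂ *ᵥ c)) + Q₂ *ᵥ b + t) =
          C * (gauss1 (μθ b) σ2 θh * mvGauss Sb μb b) := by
  have hHs : Hᵀ = H := (isHermitian_iff_symm H).mp hH.isHermitian
  have hΩs : (Ω⁻¹)ᵀ = Ω⁻¹ := (isHermitian_iff_symm _).mp hΩ.inv.isHermitian
  have hγ : 0 ≤ c ⬝ᵥ (H *ᵥ c) := by simpa using hH.posSemidef.dotProduct_mulVec_nonneg c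
  have hσpos : 0 < σ2 := by
    rw [hσ2]; exact inv_pos.mpr (by positivity)
  have hσ : σ2 * (ν⁻¹ + c ⬝ᵥ (H *ᵥ c)) = 1 := by
    rw [hσ2]; exact inv_mul_cancel₀ (by positivity)
  have hν' : ν ≠ 0 := hν.ne'
  have hσ' : σ2 ≠ 0 := hσpos.ne'
  -- Sb is positive definite
  have hSbPD : Sb.PosDef := by
    rw [hSb]
    refine hH.inv.add_posSemidef (PosSemidef.of_dotProduct_mulVec_nonneg ?_ ?_)
    · rw [isHermitian_iff_symm]
      ext i j
      simp only [transpose_apply, Matrix.smul_apply, vecMulVec_apply, smul_eq_mul]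
      ring
    · intro x
      have hx : x ⬝ᵥ ((ν • vecMulVec c c) *ᵥ x) = ν * (c ⬝ᵥ x) ^ 2 := by
        rw [Matrix.smul_mulVec, vmv_mulVec, dotProduct_smul, dotProduct_smul,
          smul_eq_mul, smul_eq_mul, dotProduct_comm x c]
        ring
      simpa [hx] using mul_nonneg hν.le (sq_nonneg (c ⬝ᵥ x))
  refine ⟨hSbPD, ?_⟩
  -- Sherman–Morrison: explicit inverse of Sb
  have hdet : IsUnit H.det := isUnit_iff_ne_zero.mpr hH.det_pos.ne'
  have hHinv : H⁻¹ * H = 1 := nonsing_inv_mul H hdet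
  have hic : H⁻¹ *ᵥ (H *ᵥ c) = c := by rw [mulVec_mulVec, hHinv, one_mulVec]
  have hSbinv : Sb⁻¹ = H - σ2 • vecMulVec (H *ᵥ c) (H *ᵥ c) := by
    apply inv_eq_right_inv
    rw [hSb]
    have e1 : H⁻¹ * (σ2 • vecMulVec (H *ᵥ c) (H *ᵥ c)) = σ2 • vecMulVec c (H *ᵥ c) := by
      rw [mul_smul_comm, mul_vmv, hic]
    have e2 : (ν • vecMulVec c c) * H = ν • vecMulVec c (H *ᵥ c) := by
      rw [smul_mul_assoc, vmv_mul, hHs]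
    have e3 : (ν • vecMulVec c c) * (σ2 • vecMulVec (H *ᵥ c) (H *ᵥ c)) =
        (ν * σ2 * (c ⬝ᵥ (H *ᵥ c))) • vecMulVec c (H *ᵥ c) := by
      rw [smul_mul_assoc, mul_smul_comm, mul_vmv, vmv_mulVec, vmv_smul_left,
        smul_smul, smul_smul]
    have hc0 : ν - σ2 - ν * σ2 * (c ⬝ᵥ (H *ᵥ c)) = 0 := by
      field_simp at hσ; linarith
    rw [add_mul, mul_sub, mul_sub, hHinv, e1, e2, e3]
    have hmod : (1 : Matrix (Fin d) (Fin d) ℝ) - σ2 • vecMulVec c (H *ᵥ c) +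
        (ν • vecMulVec c (H *ᵥ c) - (ν * σ2 * (c ⬝ᵥ (H *ᵥ c))) • vecMulVec c (H *ᵥ c)) =
        1 + (ν - σ2 - ν * σ2 * (c ⬝ᵥ (H *ᵥ c))) • vecMulVec c (H *ᵥ c) := by
      module
    rw [hmod, hc0, zero_smul, add_zero]
  have hMs : (Sb⁻¹)ᵀ = Sb⁻¹ := (isHermitian_iff_symm _).mp hSbPD.inv.isHermitian
  have hMw : Sb⁻¹ *ᵥ μb = -k + (σ2 * (ν⁻¹ * θ + c ⬝ᵥ k)) • (H *ᵥ c) := by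
    rw [hμb, mulVec_mulVec, nonsing_inv_mul Sb (isUnit_iff_ne_zero.mpr hSbPD.det_pos.ne'),
      one_mulVec]
  -- positivity of the normalising constants
  have h2π : (0 : ℝ) < 2 * π := by positivity
  have hdetΩ := hΩ.det_pos
  have hdetSb := hSbPD.det_pos
  refine ⟨((Real.sqrt (2 * π * ν))⁻¹ * ((2 * π) ^ (-(p : ℝ) / 2) * Ω.det ^ (-(1 : ℝ) / 2))) /
      ((Real.sqrt (2 * π * σ2))⁻¹ * ((2 * π) ^ (-(d : ℝ) / 2) * Sb.det ^ (-(1 : ℝ) / 2))) *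
      Real.exp (-(θ ^ 2 / ν + t ⬝ᵥ (Ω⁻¹ *ᵥ t) - σ2 * (ν⁻¹ * θ + c ⬝ᵥ k) ^ 2 -
        μb ⬝ᵥ (-k + (σ2 * (ν⁻¹ * θ + c ⬝ᵥ k)) • (H *ᵥ c))) / 2), by positivity, ?_⟩
  intro θh b
  -- the key quadratic-form identity
  have key : (θh - θ) ^ 2 / ν +
      ((θh • (-(Q₂ *ᵥ c)) + Q₂ *ᵥ b + t) ⬝ᵥ (Ω⁻¹ *ᵥ (θh • (-(Q₂ *ᵥ c)) + Q₂ *ᵥ b + t))) =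
      (θh - μθ b) ^ 2 / σ2 + ((b - μb) ⬝ᵥ (Sb⁻¹ *ᵥ (b - μb))) +
      (θ ^ 2 / ν + t ⬝ᵥ (Ω⁻¹ *ᵥ t) - σ2 * (ν⁻¹ * θ + c ⬝ᵥ k) ^ 2 -
        μb ⬝ᵥ (-k + (σ2 * (ν⁻¹ * θ + c ⬝ᵥ k)) • (H *ᵥ c))) := by
    have hXu : θh • (-(Q₂ *ᵥ c)) + Q₂ *ᵥ b + t = Q₂ *ᵥ (b - θh • c) + t := by
      rw [mulVec_sub, mulVec_smul]; module
    have pA : (Q₂ *ᵥ (b - θh • c)) ⬝ᵥ (Ω⁻¹ *ᵥ (Q₂ *ᵥ (b - θh • c))) =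
        (b - θh • c) ⬝ᵥ (H *ᵥ (b - θh • c)) := by
      rw [mulVec_dot, mulVec_mulVec, mulVec_mulVec, hHdef]
    have pB : (Q₂ *ᵥ (b - θh • c)) ⬝ᵥ (Ω⁻¹ *ᵥ t) = (b - θh • c) ⬝ᵥ k := by
      rw [mulVec_dot, mulVec_mulVec, ← hk]
    have pC : t ⬝ᵥ (Ω⁻¹ *ᵥ (Q₂ *ᵥ (b - θh • c))) = (b - θh • c) ⬝ᵥ k := by
      rw [dot_symm _ hΩs]; exact pB
    have expandX : (θh • (-(Q₂ *ᵥ c)) + Q₂ *ᵥ b + t) ⬝ᵥ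
        (Ω⁻¹ *ᵥ (θh • (-(Q₂ *ᵥ c)) + Q₂ *ᵥ b + t)) =
        (b - θh • c) ⬝ᵥ (H *ᵥ (b - θh • c)) + 2 * ((b - θh • c) ⬝ᵥ k) + t ⬝ᵥ (Ω⁻¹ *ᵥ t) := by
      rw [hXu, mulVec_add, dotProduct_add, add_dotProduct, add_dotProduct, pA, pB, pC]
      ring
    have hbHc : b ⬝ᵥ (H *ᵥ c) = c ⬝ᵥ (H *ᵥ b) := dot_symm H hHs b c
    have hq1 : (b - θh • c) ⬝ᵥ (H *ᵥ (b - θh • c)) = b ⬝ᵥ (H *ᵥ b) -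
        2 * θh * (c ⬝ᵥ (H *ᵥ b)) + θh ^ 2 * (c ⬝ᵥ (H *ᵥ c)) := by
      rw [mulVec_sub, mulVec_smul, dotProduct_sub, sub_dotProduct, sub_dotProduct,
        dotProduct_smul, dotProduct_smul, smul_dotProduct, smul_dotProduct, hbHc]
      simp only [smul_eq_mul]
      ring
    have hq2 : (b - θh • c) ⬝ᵥ k = b ⬝ᵥ k - θh * (c ⬝ᵥ k) := by
      rw [sub_dotProduct, smul_dotProduct]; simp
    have hMb : b ⬝ᵥ (Sb⁻¹ *ᵥ b) = b ⬝ᵥ (H *ᵥ b) - σ2 * (c ⬝ᵥ (H *ᵥ b)) ^ 2 := by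
      rw [hSbinv, sub_mulVec, Matrix.smul_mulVec, vmv_mulVec, dotProduct_sub,
        dotProduct_smul, dotProduct_smul]
      have e1 : (H *ᵥ c) ⬝ᵥ b = c ⬝ᵥ (H *ᵥ b) := by rw [dotProduct_comm, hbHc]
      have e2 : b ⬝ᵥ (H *ᵥ c) = c ⬝ᵥ (H *ᵥ b) := hbHc
      rw [e1, e2]
      simp only [smul_eq_mul]
      ring
    have hbw : b ⬝ᵥ (-k + (σ2 * (ν⁻¹ * θ + c ⬝ᵥ k)) • (H *ᵥ c)) =
        -(b ⬝ᵥ k) + σ2 * (ν⁻¹ * θ + c ⬝ᵥ k) * (c ⬝ᵥ (H *ᵥ b)) := by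
      rw [dotProduct_add, dotProduct_neg, dotProduct_smul, smul_eq_mul, hbHc]
    have hquad : (b - μb) ⬝ᵥ (Sb⁻¹ *ᵥ (b - μb)) =
        b ⬝ᵥ (Sb⁻¹ *ᵥ b) -
        2 * (b ⬝ᵥ (-k + (σ2 * (ν⁻¹ * θ + c ⬝ᵥ k)) • (H *ᵥ c))) +
        μb ⬝ᵥ (-k + (σ2 * (ν⁻¹ * θ + c ⬝ᵥ k)) • (H *ᵥ c)) := by
      have h1 : b ⬝ᵥ (Sb⁻¹ *ᵥ μb) = b ⬝ᵥ (-k + (σ2 * (ν⁻¹ * θ + c ⬝ᵥ k)) • (H *ᵥ c)) := by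
        rw [hMw]
      have h2 : μb ⬝ᵥ (Sb⁻¹ *ᵥ b) = b ⬝ᵥ (-k + (σ2 * (ν⁻¹ * θ + c ⬝ᵥ k)) • (H *ᵥ c)) := by
        rw [dot_symm _ hMs, hMw]
      have h3 : μb ⬝ᵥ (Sb⁻¹ *ᵥ μb) = μb ⬝ᵥ (-k + (σ2 * (ν⁻¹ * θ + c ⬝ᵥ k)) • (H *ᵥ c)) := by
        rw [hMw]
      rw [mulVec_sub, dotProduct_sub, sub_dotProduct, sub_dotProduct, h1, h2, h3]
      ring
    rw [expandX, hq1, hq2, hquad, hMb, hbw, hμθ b]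
    have hinv : σ2⁻¹ = ν⁻¹ + c ⬝ᵥ (H *ᵥ c) := by
      have h1 : σ2 * (ν⁻¹ + c ⬝ᵥ (H *ᵥ c)) * σ2⁻¹ = σ2⁻¹ := by rw [hσ, one_mul]
      rw [← h1, mul_comm σ2, mul_assoc, mul_inv_cancel₀ hσ', mul_one]
    have hss : σ2 * σ2⁻¹ = 1 := mul_inv_cancel₀ hσ'
    linear_combination (-θh ^ 2) * hinv +
      (2 * θh * (ν⁻¹ * θ + c ⬝ᵥ k + c ⬝ᵥ (H *ᵥ b)) -
        σ2 * (ν⁻¹ * θ + c ⬝ᵥ k + c ⬝ᵥ (H *ᵥ b)) ^ 2) * hss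
  -- assemble the densities
  have main : Real.exp (-(θh - θ) ^ 2 / (2 * ν)) *
      Real.exp (-(1 / 2) * ((θh • (-(Q₂ *ᵥ c)) + Q₂ *ᵥ b + t) ⬝ᵥ
        (Ω⁻¹ *ᵥ (θh • (-(Q₂ *ᵥ c)) + Q₂ *ᵥ b + t)))) =
      Real.exp (-(θ ^ 2 / ν + t ⬝ᵥ (Ω⁻¹ *ᵥ t) - σ2 * (ν⁻¹ * θ + c ⬝ᵥ k) ^ 2 -
        μb ⬝ᵥ (-k + (σ2 * (ν⁻¹ * θ + c ⬝ᵥ k)) • (H *ᵥ c))) / 2) *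
      (Real.exp (-(θh - μθ b) ^ 2 / (2 * σ2)) *
        Real.exp (-(1 / 2) * ((b - μb) ⬝ᵥ (Sb⁻¹ *ᵥ (b - μb))))) := by
    rw [← Real.exp_add, ← Real.exp_add, ← Real.exp_add]
    congr 1
    linear_combination (-(1 : ℝ) / 2) * key
  have hNR0 : (Real.sqrt (2 * π * σ2))⁻¹ *
      ((2 * π) ^ (-(d : ℝ) / 2) * Sb.det ^ (-(1 : ℝ) / 2)) ≠ 0 := by positivity
  calc gauss1 θ ν θh * mvGauss Ω 0 (θh • (-(Q₂ *ᵥ c)) + Q₂ *ᵥ b + t)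
      = ((Real.sqrt (2 * π * ν))⁻¹ * ((2 * π) ^ (-(p : ℝ) / 2) * Ω.det ^ (-(1 : ℝ) / 2))) *
        (Real.exp (-(θh - θ) ^ 2 / (2 * ν)) *
        Real.exp (-(1 / 2) * ((θh • (-(Q₂ *ᵥ c)) + Q₂ *ᵥ b + t) ⬝ᵥ
          (Ω⁻¹ *ᵥ (θh • (-(Q₂ *ᵥ c)) + Q₂ *ᵥ b + t))))) := by
        simp only [gauss1, mvGauss, sub_zero]; ring
    _ = ((Real.sqrt (2 * π * ν))⁻¹ * ((2 * π) ^ (-(p : ℝ) / 2) * Ω.det ^ (-(1 : ℝ) / 2))) *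
        (Real.exp (-(θ ^ 2 / ν + t ⬝ᵥ (Ω⁻¹ *ᵥ t) - σ2 * (ν⁻¹ * θ + c ⬝ᵥ k) ^ 2 -
          μb ⬝ᵥ (-k + (σ2 * (ν⁻¹ * θ + c ⬝ᵥ k)) • (H *ᵥ c))) / 2) *
        (Real.exp (-(θh - μθ b) ^ 2 / (2 * σ2)) *
          Real.exp (-(1 / 2) * ((b - μb) ⬝ᵥ (Sb⁻¹ *ᵥ (b - μb)))))) := by rw [main]
    _ = (((Real.sqrt (2 * π * ν))⁻¹ * ((2 * π) ^ (-(p : ℝ) / 2) * Ω.det ^ (-(1 : ℝ) / 2))) /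
        ((Real.sqrt (2 * π * σ2))⁻¹ * ((2 * π) ^ (-(d : ℝ) / 2) * Sb.det ^ (-(1 : ℝ) / 2))) *
        Real.exp (-(θ ^ 2 / ν + t ⬝ᵥ (Ω⁻¹ *ᵥ t) - σ2 * (ν⁻¹ * θ + c ⬝ᵥ k) ^ 2 -
          μb ⬝ᵥ (-k + (σ2 * (ν⁻¹ * θ + c ⬝ᵥ k)) • (H *ᵥ c))) / 2)) *
        (((Real.sqrt (2 * π * σ2))⁻¹ * ((2 * π) ^ (-(d : ℝ) / 2) * Sb.det ^ (-(1 : ℝ) / 2))) *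
        (Real.exp (-(θh - μθ b) ^ 2 / (2 * σ2)) *
          Real.exp (-(1 / 2) * ((b - μb) ⬝ᵥ (Sb⁻¹ *ᵥ (b - μb)))))) := by
        field_simp
    _ = (((Real.sqrt (2 * π * ν))⁻¹ * ((2 * π) ^ (-(p : ℝ) / 2) * Ω.det ^ (-(1 : ℝ) / 2))) /
        ((Real.sqrt (2 * π * σ2))⁻¹ * ((2 * π) ^ (-(d : ℝ) / 2) * Sb.det ^ (-(1 : ℝ) / 2))) *
        Real.exp (-(θ ^ 2 / ν + t ⬝ᵥ (Ω⁻¹ *ᵥ t) - σ2 * (ν⁻¹ * θ + c ⬝ᵥ k) ^ 2 -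
          μb ⬝ᵥ (-k + (σ2 * (ν⁻¹ * θ + c ⬝ᵥ k)) • (H *ᵥ c))) / 2)) *
        (gauss1 (μθ b) σ2 θh * mvGauss Sb μb b) := by
        simp only [gauss1, mvGauss]; ring
end

section
/- Let d, p ≥ 1, Ω ∈ ℝ^{p×p} positive definite, Q₂ ∈ ℝ^{p×d} with H := Q₂ᵀΩ⁻¹Q₂ positive definite, c̃ ∈ ℝ^d, t ∈ ℝ^p, θ ∈ ℝ, ν > 0. Set Q̃₁ = −Q₂c̃, k = Q₂ᵀΩ⁻¹t, σ_θ̂² = (ν⁻¹ + c̃ᵀHc̃)⁻¹, Σ_b = H⁻¹ + ν c̃c̃ᵀ, μ_b = Σ_b(−k + σ_θ̂²Hc̃(ν⁻¹θ + c̃ᵀk)), and μ_θ̂(b) = σ_θ̂²(ν⁻¹θ + c̃ᵀk + c̃ᵀHb). Then for every x ∈ ℝ, the ratio (∫_{b∈O} ∫_{θ̂ ≤ x} φ(θ̂; θ, ν)·φ(Q̃₁θ̂ + Q₂b + t; 0, Ω) dθ̂ db) / (∫_{b∈O} ∫_{θ̂ ∈ ℝ} φ(θ̂; θ, ν)·φ(Q̃₁θ̂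 + Q₂b + t; 0, Ω) dθ̂ db) equals (∫_{b∈O} Φ((x − μ_θ̂(b))/σ_θ̂) · φ(b; μ_b, Σ_b) db) / (∫_{b∈O} φ(b; μ_b, Σ_b) db), where both denominators are positive and finite. -/
open MeasureTheory Matrix Real

/-- Standard normal CDF `Φ`. -/
noncomputable def stdNormalCDF (x : ℝ) : ℝ :=
  ∫ z in Set.Iic x, Real.exp (-z ^ 2 / 2) / Real.sqrt (2 * π)

/-- The positive orthant in `ℝ^d`. -/
def posOrthant (d : ℕ) : Set (Fin d → ℝ) := {v | ∀ i, 0 < v i}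

/-! ### Auxiliary lemmas: one-dimensional Gaussian integrals -/

lemma gauss1_eq_pdf (m : ℝ) {s2 : ℝ} (hs : 0 < s2) :
    gauss1 m s2 = ProbabilityTheory.gaussianPDFReal m ⟨s2, hs.le⟩ := by
  funext x
  simp [gauss1, ProbabilityTheory.gaussianPDFReal, neg_div]
  rfl

lemma integrable_gauss1 (m : ℝ) {s2 : ℝ} (hs : 0 < s2) : Integrable (gauss1 m s2) := by
  rw [gauss1_eq_pdf m hs]
  exact ProbabilityTheory.integrable_gaussianPDFReal m _

lemma integral_gauss1 (m : ℝ) {s2 : ℝ} (hs : 0 < s2) : ∫ x, gauss1 m s2 x = 1 := by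
  rw [gauss1_eq_pdf m hs]
  exact ProbabilityTheory.integral_gaussianPDFReal_eq_one m
    (by intro h; exact hs.ne' (congrArg Subtype.val h))

lemma stdNormalCDF_eq (y : ℝ) :
    stdNormalCDF y = ∫ z in Set.Iic y, ProbabilityTheory.gaussianPDFReal 0 1 z := by
  unfold stdNormalCDF
  congr 1
  funext z
  simp [ProbabilityTheory.gaussianPDFReal, div_eq_inv_mul, neg_div]

lemma integral_gauss1_Iic (m : ℝ) {s2 : ℝ} (hs : 0 < s2) (x : ℝ) :
    ∫ z in Set.Iic x, gauss1 m s2 z = stdNormalCDF ((x - m) / Real.sqrt s2) := by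
  open ProbabilityTheory in
  set v : NNReal := ⟨s2, hs.le⟩ with hvdef
  have hv : v ≠ 0 := by
    rw [hvdef]; intro h; exact hs.ne' (congrArg Subtype.val h)
  have hsq : 0 < Real.sqrt s2 := Real.sqrt_pos.mpr hs
  have h2 : Measure.map (fun u => Real.sqrt s2 * u) (gaussianReal 0 1) = gaussianReal 0 v := by
    have := gaussianReal_map_const_mul (μ := 0) (v := 1) (Real.sqrt s2)
    rw [this]
    congr 1
    · simp
    · ext; show _ = s2; simp [Real.sq_sqrt hs.le]
  have hmap : gaussianReal m v
      = Measure.map (fun u => Real.sqrt s2 * u + m) (gaussianReal 0 1) := by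
    have h3 : Measure.map (· + m) (gaussianReal 0 v) = gaussianReal m v := by
      simpa using gaussianReal_map_add_const (μ := 0) (v := v) m
    rw [← h3, ← h2, Measure.map_map (by fun_prop) (by fun_prop)]
    rfl
  have hpre : (fun u => Real.sqrt s2 * u + m) ⁻¹' (Set.Iic x)
      = Set.Iic ((x - m) / Real.sqrt s2) := by
    ext u
    simp only [Set.mem_preimage, Set.mem_Iic]
    rw [le_div_iff₀ hsq, mul_comm]
    constructor <;> intro h <;> linarith
  have key : gaussianReal m v (Set.Iic x)
      = gaussianReal 0 1 (Set.Iic ((x - m) / Real.sqrt s2)) := by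
    rw [hmap, Measure.map_apply (by fun_prop) measurableSet_Iic, hpre]
  rw [gaussianReal_apply_eq_integral _ hv, gaussianReal_apply_eq_integral _ one_ne_zero] at key
  have h4 := ENNReal.ofReal_eq_ofReal_iff
    (setIntegral_nonneg measurableSet_Iic (fun z _ => gaussianPDFReal_nonneg _ _ _))
    (setIntegral_nonneg measurableSet_Iic (fun z _ => gaussianPDFReal_nonneg _ _ _)) |>.mp key
  rw [gauss1_eq_pdf m hs, stdNormalCDF_eq]
  exact h4

/-! ### Auxiliary lemmas: multivariate Gaussian integrability and positivity -/

lemma continuous_quad {d : ℕ} (A : Matrix (Fin d) (Fin d) ℝ) :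
    Continuous (fun x : Fin d → ℝ => x ⬝ᵥ (A *ᵥ x)) := by
  unfold dotProduct mulVec
  dsimp [dotProduct]
  fun_prop

lemma posdef_quad_lb {d : ℕ} {M : Matrix (Fin d) (Fin d) ℝ} (hM : M.PosDef) :
    ∃ ε > 0, ∀ x : Fin d → ℝ, ε * ∑ i, x i ^ 2 ≤ x ⬝ᵥ (M *ᵥ x) := by
  rcases Nat.eq_zero_or_pos d with hd | hd
  · exact ⟨1, one_pos, fun x => by subst hd; simp⟩
  have hpos : ∀ x : Fin d → ℝ, x ≠ 0 → 0 < x ⬝ᵥ (M *ᵥ x) := by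
    intro x hx
    have := hM.dotProduct_mulVec_pos hx
    simpa using this
  haveI : Nonempty (Fin d) := ⟨⟨0, hd⟩⟩
  have hne : (Metric.sphere (0 : Fin d → ℝ) 1).Nonempty :=
    NormedSpace.sphere_nonempty.mpr zero_le_one
  have hcpt : IsCompact (Metric.sphere (0 : Fin d → ℝ) 1) := isCompact_sphere _ _
  obtain ⟨z, hz, hzmin⟩ := hcpt.exists_isMinOn hne ((continuous_quad M).continuousOn)
  have hznorm : ‖z‖ = 1 := by simpa using hz
  have hz0 : z ≠ 0 := by intro h; rw [h] at hznorm; simp at hznorm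
  set ε0 : ℝ := z ⬝ᵥ (M *ᵥ z) with hε0
  have hε0pos : 0 < ε0 := hpos z hz0
  have hlb : ∀ x : Fin d → ℝ, ε0 * ‖x‖ ^ 2 ≤ x ⬝ᵥ (M *ᵥ x) := by
    intro x
    rcases eq_or_ne x 0 with rfl | hx
    · simp
    · have hnx : (0:ℝ) < ‖x‖ := norm_pos_iff.mpr hx
      set u := ‖x‖⁻¹ • x with hu
      have hu1 : u ∈ Metric.sphere (0 : Fin d → ℝ) 1 := by
        simp [hu, norm_smul, abs_of_pos (inv_pos.mpr hnx), inv_mul_cancel₀ hnx.ne']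
      have h1 : ε0 ≤ u ⬝ᵥ (M *ᵥ u) := hzmin hu1
      have h2 : u ⬝ᵥ (M *ᵥ u) = ‖x‖⁻¹ * (‖x‖⁻¹ * (x ⬝ᵥ (M *ᵥ x))) := by
        simp [hu, Matrix.mulVec_smul, smul_dotProduct, dotProduct_smul,
          smul_eq_mul]
      rw [h2] at h1
      have := mul_le_mul_of_nonneg_left h1 (le_of_lt (by positivity : (0:ℝ) < ‖x‖ ^ 2))
      calc ε0 * ‖x‖ ^ 2 = ‖x‖ ^ 2 * ε0 := by ring
        _ ≤ ‖x‖ ^ 2 * (‖x‖⁻¹ * (‖x‖⁻¹ * (x ⬝ᵥ (M *ᵥ x)))) := this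
        _ = x ⬝ᵥ (M *ᵥ x) := by field_simp
  refine ⟨ε0 / d, by positivity, fun x => ?_⟩
  have hsum : ∑ i, x i ^ 2 ≤ d * ‖x‖ ^ 2 := by
    calc ∑ i, x i ^ 2 ≤ ∑ _i : Fin d, ‖x‖ ^ 2 := by
          refine Finset.sum_le_sum fun i _ => ?_
          have := norm_le_pi_norm x i
          have h2 : |x i| ≤ ‖x‖ := by simpa using this
          calc x i ^ 2 = |x i| ^ 2 := by rw [sq_abs]
            _ ≤ ‖x‖ ^ 2 := pow_le_pow_left₀ (abs_nonneg _) h2 2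
      _ = d * ‖x‖ ^ 2 := by simp [Finset.sum_const]
  have hd' : (0:ℝ) < d := by exact_mod_cast hd
  calc ε0 / d * ∑ i, x i ^ 2 ≤ ε0 / d * (d * ‖x‖ ^ 2) := by
        apply mul_le_mul_of_nonneg_left hsum (by positivity)
    _ = ε0 * ‖x‖ ^ 2 := by field_simp
    _ ≤ x ⬝ᵥ (M *ᵥ x) := hlb x

lemma integrable_exp_neg_quad {d : ℕ} {M : Matrix (Fin d) (Fin d) ℝ} (hM : M.PosDef) :
    Integrable (fun x : Fin d → ℝ => Real.exp (-(1/2) * (x ⬝ᵥ (M *ᵥ x)))) := by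
  obtain ⟨ε, hε, hlb⟩ := posdef_quad_lb hM
  have hbase : Integrable (fun x : Fin d → ℝ => Real.exp (-(ε/2) * ∑ i, x i ^ 2)) := by
    have hc : Integrable (fun v : Fin d → ℝ =>
        Complex.exp (-(ε/2 : ℂ) * ∑ i, (v i : ℂ) ^ 2 + ∑ i, (0 : ℂ) * v i)) := by
      apply GaussianFourier.integrable_cexp_neg_mul_sum_add
      simpa using hε
    have hre : ∀ v : Fin d → ℝ, (-(ε/2 : ℂ) * ∑ i, (v i : ℂ) ^ 2 + ∑ i, (0:ℂ) * v i)
        = ((-(ε/2) * ∑ i, v i ^ 2 : ℝ) : ℂ) := by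
      intro v; push_cast; simp
    exact hc.norm.congr (Filter.Eventually.of_forall fun v => by
      simp only [hre v, Complex.norm_exp_ofReal])
  refine hbase.mono' ?_ ?_
  · exact (Real.continuous_exp.comp (continuous_const.mul (continuous_quad M))).aestronglyMeasurable
  · refine Filter.Eventually.of_forall fun x => ?_
    rw [Real.norm_eq_abs, abs_of_pos (Real.exp_pos _), Real.exp_le_exp]
    nlinarith [hlb x]

lemma integrable_mvGauss {d : ℕ} {S : Matrix (Fin d) (Fin d) ℝ} (hS : S.PosDef) (μ : Fin d → ℝ) :
    Integrable (mvGauss S μ) := by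
  have h1 : Integrable (fun y : Fin d → ℝ => Real.exp (-(1/2) * (y ⬝ᵥ (S⁻¹ *ᵥ y)))) :=
    integrable_exp_neg_quad hS.inv
  have h2 := (h1.comp_sub_right μ).const_mul ((2*π)^(-(d:ℝ)/2) * S.det^(-(1:ℝ)/2))
  exact h2.congr (Filter.Eventually.of_forall fun x => by simp [mvGauss, mul_assoc])

lemma mvGauss_pos {d : ℕ} {S : Matrix (Fin d) (Fin d) ℝ} (hS : S.PosDef) (μ x : Fin d → ℝ) :
    0 < mvGauss S μ x := by
  have h1 : (0:ℝ) < (2*π) ^ (-(d:ℝ)/2) := Real.rpow_pos_of_pos (by positivity) _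
  have h2 : (0:ℝ) < S.det ^ (-(1:ℝ)/2) := Real.rpow_pos_of_pos hS.det_pos _
  exact mul_pos (mul_pos h1 h2) (Real.exp_pos _)

/-! ### Auxiliary lemmas: positivity of integrals on the positive orthant -/

lemma isOpen_posOrthant (d : ℕ) : IsOpen (posOrthant d) := by
  have : posOrthant d = ⋂ i, (fun v : Fin d → ℝ => v i) ⁻¹' Set.Ioi 0 := by
    ext v; simp [posOrthant]
  rw [this]
  exact isOpen_iInter_of_finite fun i => (continuous_apply i).isOpen_preimage _ isOpen_Ioi

lemma posOrthant_nonempty (d : ℕ) : (posOrthant d).Nonempty :=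
  ⟨fun _ => 1, fun _ => one_pos⟩

lemma setIntegral_pos_orthant {d : ℕ} {f : (Fin d → ℝ) → ℝ}
    (hf_int : IntegrableOn f (posOrthant d)) (hf_pos : ∀ x, 0 < f x) :
    0 < ∫ x in posOrthant d, f x := by
  rw [setIntegral_pos_iff_support_of_nonneg_ae
    (Filter.Eventually.of_forall fun x => (hf_pos x).le) hf_int]
  have hsupp : Function.support f = Set.univ := by
    ext x; simp [Function.support, (hf_pos x).ne']
  rw [hsupp, Set.univ_inter]
  exact (isOpen_posOrthant d).measure_pos volume (posOrthant_nonempty d)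

/-! ### Auxiliary lemmas: matrix algebra -/

lemma vecMulVec_mulVec' {n : ℕ} (u v w : Fin n → ℝ) :
    vecMulVec u v *ᵥ w = (v ⬝ᵥ w) • u := by
  ext i
  simp only [vecMulVec, mulVec, dotProduct, of_apply, Pi.smul_apply, smul_eq_mul,
    Finset.sum_mul, Finset.mul_sum]
  exact Finset.sum_congr rfl fun j _ => by ring

lemma dot_symm_s1 {n : ℕ} {A : Matrix (Fin n) (Fin n) ℝ} (hA : Aᵀ = A) (u v : Fin n → ℝ) :
    u ⬝ᵥ (A *ᵥ v) = v ⬝ᵥ (A *ᵥ u) := by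
  rw [dotProduct_mulVec, ← hA, vecMul_transpose, dotProduct_comm, hA]

lemma dot_transpose {m n : ℕ} (A : Matrix (Fin m) (Fin n) ℝ) (u : Fin n → ℝ) (v : Fin m → ℝ) :
    u ⬝ᵥ (Aᵀ *ᵥ v) = (A *ᵥ u) ⬝ᵥ v := by
  rw [mulVec_transpose, dotProduct_comm, ← dotProduct_mulVec, dotProduct_comm]

section MatrixFacts
variable {d : ℕ}
  (H : Matrix (Fin d) (Fin d) ℝ) (hH : H.PosDef)
  (c : Fin d → ℝ) (ν : ℝ) (hν : 0 < ν)
  (σ2 : ℝ) (hσ2 : σ2 = (ν⁻¹ + c ⬝ᵥ (H *ᵥ c))⁻¹)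
  (Sb : Matrix (Fin d) (Fin d) ℝ) (hSb : Sb = H⁻¹ + ν • vecMulVec c c)

include hH hν hSb in
lemma Sb_posdef : Sb.PosDef := by
  rw [hSb]
  apply hH.inv.add_posSemidef
  refine Matrix.PosSemidef.of_dotProduct_mulVec_nonneg ?_ ?_
  · show _ = _
    ext i j
    simp [vecMulVec_apply, mul_comm]
  · intro x
    have h1 : (ν • vecMulVec c c) *ᵥ x = ν • ((c ⬝ᵥ x) • c) := by
      rw [smul_mulVec, vecMulVec_mulVec']
    rw [h1]
    have : star x ⬝ᵥ (ν • ((c ⬝ᵥ x) • c)) = ν * (c ⬝ᵥ x)^2 := by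
      simp only [star_trivial, dotProduct_smul, smul_eq_mul, dotProduct_comm x c]
      ring
    rw [this]
    positivity

include hH hν hσ2 hSb in
lemma SbM_eq_one :
    Sb * (H - σ2 • vecMulVec (H *ᵥ c) (H *ᵥ c)) = 1 := by
  have hHsym : Hᵀ = H := by
    have := hH.isHermitian
    rwa [← conjTranspose_eq_transpose_of_trivial]
  have hdet : IsUnit H.det := isUnit_iff_ne_zero.mpr hH.det_pos.ne'
  have hν' : ν ≠ 0 := hν.ne'
  set a : Fin d → ℝ := H *ᵥ c with ha
  set s : ℝ := c ⬝ᵥ a with hs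
  have hs0 : 0 ≤ s := by have := hH.posSemidef.dotProduct_mulVec_nonneg c; simpa [hs, ha] using this
  have hσpos : 0 < σ2 := by
    rw [hσ2]; exact inv_pos.mpr (add_pos_of_pos_of_nonneg (inv_pos.mpr hν) hs0)
  have hσ1 : σ2 * (ν⁻¹ + s) = 1 := by
    rw [hσ2]; exact inv_mul_cancel₀ (add_pos_of_pos_of_nonneg (inv_pos.mpr hν) hs0).ne'
  have hνν : ν * ν⁻¹ = 1 := mul_inv_cancel₀ hν'
  have hHinva : H⁻¹ *ᵥ a = c := by
    rw [ha, mulVec_mulVec, Matrix.nonsing_inv_mul H hdet, one_mulVec]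
  have key : ∀ x : Fin d → ℝ,
      Sb *ᵥ ((H - σ2 • vecMulVec a a) *ᵥ x) = x := by
    intro x
    have hMx : (H - σ2 • vecMulVec a a) *ᵥ x = H *ᵥ x - (σ2 * (a ⬝ᵥ x)) • a := by
      rw [Matrix.sub_mulVec, smul_mulVec, vecMulVec_mulVec', smul_smul]
    rw [hMx, hSb]
    rw [Matrix.add_mulVec, Matrix.mulVec_sub, Matrix.mulVec_sub, Matrix.mulVec_smul,
      Matrix.mulVec_smul]
    rw [mulVec_mulVec, Matrix.nonsing_inv_mul H hdet, one_mulVec, hHinva]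
    rw [smul_mulVec, smul_mulVec, vecMulVec_mulVec', vecMulVec_mulVec']
    have hcHx : c ⬝ᵥ (H *ᵥ x) = a ⬝ᵥ x := by
      rw [dot_symm_s1 hHsym c x, ← ha, dotProduct_comm]
    rw [hcHx, ← hs]
    have hT : ∀ T : ℝ, x - (σ2 * T) • c + (ν • (T • c) - (σ2 * T) • ν • s • c) = x := by
      intro T
      have hcoef : -(σ2 * T) + ν * T - σ2 * T * (ν * s) = 0 := by
        linear_combination σ2 * T * hνν - ν * T * hσ1
      have : x - (σ2 * T) • c + (ν • (T • c) - (σ2 * T) • ν • s • c)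
          = x + (-(σ2 * T) + ν * T - σ2 * T * (ν * s)) • c := by
        simp only [smul_smul]
        module
      rw [this, hcoef, zero_smul, add_zero]
    exact hT (a ⬝ᵥ x)
  ext i j
  have h1 := congrFun (key (Pi.single j 1)) i
  rw [mulVec_mulVec] at h1
  rw [show ((Sb * (H - σ2 • vecMulVec a a)) *ᵥ Pi.single j 1) i
    = (Sb * (H - σ2 • vecMulVec a a)) i j * 1 from congrFun (mulVec_single _ j 1) i] at h1
  rw [mul_one] at h1
  rw [h1, Matrix.one_apply, Pi.single_apply]

end MatrixFacts

section Quad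
variable {d p : ℕ}
  (Ω : Matrix (Fin p) (Fin p) ℝ) (hΩ : Ω.PosDef)
  (Q₂ : Matrix (Fin p) (Fin d) ℝ)
  (H : Matrix (Fin d) (Fin d) ℝ) (hHdef : H = Q₂ᵀ * Ω⁻¹ * Q₂) (hH : H.PosDef)
  (c : Fin d → ℝ) (t : Fin p → ℝ)
  (k : Fin d → ℝ) (hk : k = (Q₂ᵀ * Ω⁻¹) *ᵥ t)

include hΩ hHdef hH hk in
lemma quad_expand (θh : ℝ) (b : Fin d → ℝ) :
    (θh • (-(Q₂ *ᵥ c)) + Q₂ *ᵥ b + t) ⬝ᵥ (Ω⁻¹ *ᵥ (θh • (-(Q₂ *ᵥ c)) + Q₂ *ᵥ b + t))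
      = b ⬝ᵥ (H *ᵥ b) - 2*θh*(c ⬝ᵥ (H *ᵥ b)) + θh^2 * (c ⬝ᵥ (H *ᵥ c))
        + 2*(b ⬝ᵥ k) - 2*θh*(c ⬝ᵥ k) + t ⬝ᵥ (Ω⁻¹ *ᵥ t) := by
  have hΩsym : (Ω⁻¹)ᵀ = Ω⁻¹ := by
    have := hΩ.inv.isHermitian
    rwa [← conjTranspose_eq_transpose_of_trivial]
  have hHsym : Hᵀ = H := by
    have := hH.isHermitian
    rwa [← conjTranspose_eq_transpose_of_trivial]
  have hQ : ∀ u v : Fin d → ℝ, (Q₂ *ᵥ u) ⬝ᵥ (Ω⁻¹ *ᵥ (Q₂ *ᵥ v)) = u ⬝ᵥ (H *ᵥ v) := by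
    intro u v
    rw [hHdef, show (Q₂ᵀ * Ω⁻¹ * Q₂) *ᵥ v = Q₂ᵀ *ᵥ (Ω⁻¹ *ᵥ (Q₂ *ᵥ v)) by
      rw [mulVec_mulVec, mulVec_mulVec, Matrix.mul_assoc], dot_transpose]
  have hQt : ∀ u : Fin d → ℝ, (Q₂ *ᵥ u) ⬝ᵥ (Ω⁻¹ *ᵥ t) = u ⬝ᵥ k := by
    intro u
    rw [hk, show (Q₂ᵀ * Ω⁻¹) *ᵥ t = Q₂ᵀ *ᵥ (Ω⁻¹ *ᵥ t) from (mulVec_mulVec t Q₂ᵀ Ω⁻¹).symm,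
      dot_transpose]
  have hw0 : θh • (-(Q₂ *ᵥ c)) + Q₂ *ᵥ b + t = Q₂ *ᵥ (b - θh • c) + t := by
    rw [Matrix.mulVec_sub, Matrix.mulVec_smul]
    module
  rw [hw0]
  set y : Fin d → ℝ := b - θh • c with hy
  rw [Matrix.mulVec_add, dotProduct_add, add_dotProduct, add_dotProduct]
  rw [hQ y y, hQt y, dot_symm_s1 hΩsym t (Q₂ *ᵥ y), hQt y]
  have e1 : y ⬝ᵥ (H *ᵥ y) = b ⬝ᵥ (H *ᵥ b) - 2*θh*(c ⬝ᵥ (H *ᵥ b)) + θh^2 * (c ⬝ᵥ (H *ᵥ c)) := by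
    rw [hy]
    simp only [Matrix.mulVec_sub, Matrix.mulVec_smul, sub_dotProduct, dotProduct_sub,
      smul_dotProduct, dotProduct_smul, smul_eq_mul, dot_symm_s1 hHsym b c]
    ring
  have e2 : y ⬝ᵥ k = b ⬝ᵥ k - θh * (c ⬝ᵥ k) := by
    rw [hy, sub_dotProduct, smul_dotProduct]
    simp only [smul_eq_mul]
  rw [e1, e2]
  ring

end Quad

section Factor
variable {d p : ℕ}
  (Ω : Matrix (Fin p) (Fin p) ℝ) (hΩ : Ω.PosDef)
  (Q₂ : Matrix (Fin p) (Fin d) ℝ)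
  (H : Matrix (Fin d) (Fin d) ℝ) (hHdef : H = Q₂ᵀ * Ω⁻¹ * Q₂) (hH : H.PosDef)
  (c : Fin d → ℝ) (t : Fin p → ℝ) (θ ν : ℝ) (hν : 0 < ν)
  (k : Fin d → ℝ) (hk : k = (Q₂ᵀ * Ω⁻¹) *ᵥ t)
  (σ2 : ℝ) (hσ2 : σ2 = (ν⁻¹ + c ⬝ᵥ (H *ᵥ c))⁻¹)
  (Sb : Matrix (Fin d) (Fin d) ℝ) (hSb : Sb = H⁻¹ + ν • vecMulVec c c)
  (μb : Fin d → ℝ)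
  (hμb : μb = Sb *ᵥ (-k + (σ2 * (ν⁻¹ * θ + c ⬝ᵥ k)) • (H *ᵥ c)))
  (μθ : (Fin d → ℝ) → ℝ)
  (hμθ : ∀ b, μθ b = σ2 * (ν⁻¹ * θ + c ⬝ᵥ k + c ⬝ᵥ (H *ᵥ b)))

include hΩ hHdef hH hν hk hσ2 hSb hμb hμθ in
lemma factor_key :
    ∃ K : ℝ, 0 < K ∧ ∀ (θh : ℝ) (b : Fin d → ℝ),
      gauss1 θ ν θh * mvGauss Ω 0 (θh • (-(Q₂ *ᵥ c)) + Q₂ *ᵥ b + t)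
        = K * (gauss1 (μθ b) σ2 θh * mvGauss Sb μb b) := by
  have hν' : ν ≠ 0 := hν.ne'
  have hHsym : Hᵀ = H := by
    have := hH.isHermitian; rwa [← conjTranspose_eq_transpose_of_trivial]
  set a : Fin d → ℝ := H *ᵥ c with ha
  set s : ℝ := c ⬝ᵥ a with hs
  have hs0 : 0 ≤ s := by have := hH.posSemidef.dotProduct_mulVec_nonneg c; simpa [hs, ha] using this
  have hσpos : 0 < σ2 := by
    rw [hσ2]; exact inv_pos.mpr (add_pos_of_pos_of_nonneg (inv_pos.mpr hν) hs0)
  have hσne : σ2 ≠ 0 := hσpos.ne'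
  have hσ' : σ2⁻¹ = ν⁻¹ + s := by rw [hσ2, inv_inv]
  have hσ1 : σ2 * (ν⁻¹ + s) = 1 := by rw [← hσ']; exact mul_inv_cancel₀ hσne
  set kc : ℝ := c ⬝ᵥ k with hkc
  set α : ℝ := ν⁻¹ * θ + kc with hα
  set M : Matrix (Fin d) (Fin d) ℝ := H - σ2 • vecMulVec a a with hM
  have hSbM : Sb * M = 1 := SbM_eq_one H hH c ν hν σ2 hσ2 Sb hSb
  have hMSb : M * Sb = 1 := mul_eq_one_comm.mp hSbM
  have hSbinv : Sb⁻¹ = M := inv_eq_right_inv hSbM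
  have SbPD : Sb.PosDef := Sb_posdef H hH c ν hν Sb hSb
  have hMsym : Mᵀ = M := by
    have := SbPD.inv.isHermitian
    rw [hSbinv] at this
    rwa [← conjTranspose_eq_transpose_of_trivial]
  have hMμ : M *ᵥ μb = -k + (σ2 * α) • a := by
    rw [hμb, mulVec_mulVec, hMSb, one_mulVec]
  have hMvec : ∀ x, M *ᵥ x = H *ᵥ x - (σ2 * (a ⬝ᵥ x)) • a := by
    intro x; rw [hM, Matrix.sub_mulVec, smul_mulVec, vecMulVec_mulVec', smul_smul]
  have hab : ∀ b : Fin d → ℝ, a ⬝ᵥ b = c ⬝ᵥ (H *ᵥ b) := by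
    intro b; rw [ha, dotProduct_comm, dot_symm_s1 hHsym b c]
  have qb_eq : ∀ b : Fin d → ℝ, (b - μb) ⬝ᵥ (M *ᵥ (b - μb))
      = b ⬝ᵥ (H *ᵥ b) - σ2 * (c ⬝ᵥ (H *ᵥ b))^2 + 2*(b ⬝ᵥ k) - 2*σ2*α*(c ⬝ᵥ (H *ᵥ b))
        + μb ⬝ᵥ (M *ᵥ μb) := by
    intro b
    rw [Matrix.mulVec_sub, dotProduct_sub, sub_dotProduct, sub_dotProduct,
      dot_symm_s1 hMsym μb b]
    have h1 : b ⬝ᵥ (M *ᵥ b) = b ⬝ᵥ (H *ᵥ b) - σ2 * (c ⬝ᵥ (H *ᵥ b))^2 := by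
      rw [hMvec b, dotProduct_sub, dotProduct_smul, smul_eq_mul, hab b, dotProduct_comm b a,
        hab b]
      ring
    have h2 : b ⬝ᵥ (M *ᵥ μb) = -(b ⬝ᵥ k) + σ2 * α * (c ⬝ᵥ (H *ᵥ b)) := by
      rw [hMμ, dotProduct_add, dotProduct_neg, dotProduct_smul, smul_eq_mul,
        dotProduct_comm b a, hab b]
    rw [h1, h2]
    ring
  set A1 : ℝ := (Real.sqrt (2 * π * ν))⁻¹ with hA1
  set B1 : ℝ := (Real.sqrt (2 * π * σ2))⁻¹ with hB1
  set A2 : ℝ := (2 * π) ^ (-(p : ℝ) / 2) * Ω.det ^ (-(1:ℝ) / 2) with hA2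
  set B2 : ℝ := (2 * π) ^ (-(d : ℝ) / 2) * Sb.det ^ (-(1:ℝ) / 2) with hB2
  have hA1pos : 0 < A1 := by
    rw [hA1]; exact inv_pos.mpr (Real.sqrt_pos.mpr (by positivity))
  have hB1pos : 0 < B1 := by
    rw [hB1]; exact inv_pos.mpr (Real.sqrt_pos.mpr (by positivity))
  have hA2pos : 0 < A2 :=
    mul_pos (Real.rpow_pos_of_pos (by positivity) _) (Real.rpow_pos_of_pos hΩ.det_pos _)
  have hB2pos : 0 < B2 :=
    mul_pos (Real.rpow_pos_of_pos (by positivity) _) (Real.rpow_pos_of_pos SbPD.det_pos _)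
  set R : ℝ := ν⁻¹*θ^2 + t ⬝ᵥ (Ω⁻¹ *ᵥ t) - σ2*α^2 - μb ⬝ᵥ (M *ᵥ μb) with hR
  refine ⟨(A1 * A2 / (B1 * B2)) * Real.exp (-(1/2) * R), by positivity, fun θh b => ?_⟩
  simp only [gauss1, mvGauss, sub_zero, hSbinv]
  rw [quad_expand Ω hΩ Q₂ H hHdef hH c t k hk θh b, qb_eq b, hμθ b]
  have key : (θh - θ)^2 * ν⁻¹
        + (b ⬝ᵥ (H *ᵥ b) - 2*θh*(c ⬝ᵥ (H *ᵥ b)) + θh^2 * s + 2*(b ⬝ᵥ k) - 2*θh*kc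
            + t ⬝ᵥ (Ω⁻¹ *ᵥ t))
      = (θh - σ2 * (ν⁻¹ * θ + kc + c ⬝ᵥ (H *ᵥ b)))^2 * σ2⁻¹
        + (b ⬝ᵥ (H *ᵥ b) - σ2 * (c ⬝ᵥ (H *ᵥ b))^2 + 2*(b ⬝ᵥ k) - 2*σ2*α*(c ⬝ᵥ (H *ᵥ b))
            + μb ⬝ᵥ (M *ᵥ μb)) + R := by
    rw [hσ', hR, hα]
    linear_combination (2*θh*(ν⁻¹ * θ + kc + c ⬝ᵥ (H *ᵥ b))
      - σ2*(ν⁻¹ * θ + kc + c ⬝ᵥ (H *ᵥ b))^2) * hσ1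
  have hexp : Real.exp (-(θh - θ)^2 / (2*ν))
        * Real.exp (-(1/2) * (b ⬝ᵥ (H *ᵥ b) - 2*θh*(c ⬝ᵥ (H *ᵥ b)) + θh^2 * s
            + 2*(b ⬝ᵥ k) - 2*θh*kc + t ⬝ᵥ (Ω⁻¹ *ᵥ t)))
      = Real.exp (-(1/2) * R)
        * (Real.exp (-(θh - σ2 * (ν⁻¹ * θ + kc + c ⬝ᵥ (H *ᵥ b)))^2 / (2*σ2))
          * Real.exp (-(1/2) * (b ⬝ᵥ (H *ᵥ b) - σ2 * (c ⬝ᵥ (H *ᵥ b))^2 + 2*(b ⬝ᵥ k)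
              - 2*σ2*α*(c ⬝ᵥ (H *ᵥ b)) + μb ⬝ᵥ (M *ᵥ μb)))) := by
    rw [← Real.exp_add, ← Real.exp_add, ← Real.exp_add]
    congr 1
    have hdiv : ∀ u v : ℝ, v ≠ 0 → -u / (2*v) = -(1/2) * (u * v⁻¹) := by
      intro u v hv
      field_simp
    rw [hdiv ((θh - θ)^2) ν hν',
      hdiv ((θh - σ2 * (ν⁻¹ * θ + kc + c ⬝ᵥ (H *ᵥ b)))^2) σ2 hσne]
    linear_combination (-(1/2)) * key
  calc A1 * Real.exp (-(θh - θ)^2 / (2*ν))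
        * (A2 * Real.exp (-(1/2) * (b ⬝ᵥ (H *ᵥ b) - 2*θh*(c ⬝ᵥ (H *ᵥ b)) + θh^2 * s
            + 2*(b ⬝ᵥ k) - 2*θh*kc + t ⬝ᵥ (Ω⁻¹ *ᵥ t))))
      = (A1 * A2) * (Real.exp (-(θh - θ)^2 / (2*ν))
          * Real.exp (-(1/2) * (b ⬝ᵥ (H *ᵥ b) - 2*θh*(c ⬝ᵥ (H *ᵥ b)) + θh^2 * s
            + 2*(b ⬝ᵥ k) - 2*θh*kc + t ⬝ᵥ (Ω⁻¹ *ᵥ t)))) := by ring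
    _ = (A1 * A2) * (Real.exp (-(1/2) * R)
          * (Real.exp (-(θh - σ2 * (ν⁻¹ * θ + kc + c ⬝ᵥ (H *ᵥ b)))^2 / (2*σ2))
            * Real.exp (-(1/2) * (b ⬝ᵥ (H *ᵥ b) - σ2 * (c ⬝ᵥ (H *ᵥ b))^2 + 2*(b ⬝ᵥ k)
                - 2*σ2*α*(c ⬝ᵥ (H *ᵥ b)) + μb ⬝ᵥ (M *ᵥ μb))))) := by rw [hexp]
    _ = (A1 * A2 / (B1 * B2)) * Real.exp (-(1/2) * R)
          * (B1 * Real.exp (-(θh - σ2 * (ν⁻¹ * θ + kc + c ⬝ᵥ (H *ᵥ b)))^2 / (2*σ2))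
            * (B2 * Real.exp (-(1/2) * (b ⬝ᵥ (H *ᵥ b) - σ2 * (c ⬝ᵥ (H *ᵥ b))^2 + 2*(b ⬝ᵥ k)
                - 2*σ2*α*(c ⬝ᵥ (H *ᵥ b)) + μb ⬝ᵥ (M *ᵥ μb))))) := by
        field_simp

end Factor

theorem stmt1 (d p : ℕ) (hd : 1 ≤ d) (hp : 1 ≤ p)
    (Ω : Matrix (Fin p) (Fin p) ℝ) (hΩ : Ω.PosDef)
    (Q₂ : Matrix (Fin p) (Fin d) ℝ)
    (H : Matrix (Fin d) (Fin d) ℝ) (hHdef : H = Q₂ᵀ * Ω⁻¹ * Q₂) (hH : H.PosDef)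
    (c : Fin d → ℝ) (t : Fin p → ℝ) (θ ν : ℝ) (hν : 0 < ν)
    (k : Fin d → ℝ) (hk : k = (Q₂ᵀ * Ω⁻¹) *ᵥ t)
    (σ2 : ℝ) (hσ2 : σ2 = (ν⁻¹ + c ⬝ᵥ (H *ᵥ c))⁻¹)
    (Sb : Matrix (Fin d) (Fin d) ℝ) (hSb : Sb = H⁻¹ + ν • vecMulVec c c)
    (μb : Fin d → ℝ)
    (hμb : μb = Sb *ᵥ (-k + (σ2 * (ν⁻¹ * θ + c ⬝ᵥ k)) • (H *ᵥ c)))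
    (μθ : (Fin d → ℝ) → ℝ)
    (hμθ : ∀ b, μθ b = σ2 * (ν⁻¹ * θ + c ⬝ᵥ k + c ⬝ᵥ (H *ᵥ b)))
    (joint : ℝ → (Fin d → ℝ) → ℝ)
    (hjoint : ∀ θh b, joint θh b =
      gauss1 θ ν θh * mvGauss Ω 0 (θh • (-(Q₂ *ᵥ c)) + Q₂ *ᵥ b + t)) :
    IntegrableOn (fun b => ∫ θh : ℝ, joint θh b) (posOrthant d) ∧
    0 < (∫ b in posOrthant d, ∫ θh : ℝ, joint θh b) ∧
    IntegrableOn (fun b => mvGauss Sb μb b) (posOrthant d) ∧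
    0 < (∫ b in posOrthant d, mvGauss Sb μb b) ∧
    ∀ x : ℝ,
      (∫ b in posOrthant d, ∫ θh in Set.Iic x, joint θh b) /
          (∫ b in posOrthant d, ∫ θh : ℝ, joint θh b) =
        (∫ b in posOrthant d,
            stdNormalCDF ((x - μθ b) / Real.sqrt σ2) * mvGauss Sb μb b) /
          (∫ b in posOrthant d, mvGauss Sb μb b) := by
  obtain ⟨K, hK, hfact⟩ :=
    factor_key Ω hΩ Q₂ H hHdef hH c t θ ν hν k hk σ2 hσ2 Sb hSb μb hμb μθ hμθ
  have SbPD : Sb.PosDef := Sb_posdef H hH c ν hν Sb hSb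
  have hs0 : 0 ≤ c ⬝ᵥ (H *ᵥ c) := by have := hH.posSemidef.dotProduct_mulVec_nonneg c; simpa using this
  have hσpos : 0 < σ2 := by
    rw [hσ2]; exact inv_pos.mpr (add_pos_of_pos_of_nonneg (inv_pos.mpr hν) hs0)
  have hGint : Integrable (mvGauss Sb μb) := integrable_mvGauss SbPD μb
  have hGpos : ∀ x, 0 < mvGauss Sb μb x := mvGauss_pos SbPD μb
  have inner_full : ∀ b : Fin d → ℝ, (∫ θh : ℝ, joint θh b) = K * mvGauss Sb μb b := by
    intro b
    have h1 : (fun θh => joint θh b)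
        = fun θh => (K * mvGauss Sb μb b) * gauss1 (μθ b) σ2 θh := by
      funext θh
      rw [hjoint, hfact]
      ring
    rw [h1, integral_const_mul, integral_gauss1 (μθ b) hσpos, mul_one]
  have inner_Iic : ∀ (x : ℝ) (b : Fin d → ℝ),
      (∫ θh in Set.Iic x, joint θh b)
        = K * (stdNormalCDF ((x - μθ b) / Real.sqrt σ2) * mvGauss Sb μb b) := by
    intro x b
    have h1 : (fun θh => joint θh b)
        = fun θh => (K * mvGauss Sb μb b) * gauss1 (μθ b) σ2 θh := by
      funext θh
      rw [hjoint, hfact]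
      ring
    rw [h1, integral_const_mul, integral_gauss1_Iic (μθ b) hσpos x]
    ring
  have hGon : IntegrableOn (fun b => mvGauss Sb μb b) (posOrthant d) := hGint.integrableOn
  have hGIpos : 0 < ∫ b in posOrthant d, mvGauss Sb μb b :=
    setIntegral_pos_orthant hGon hGpos
  refine ⟨?_, ?_, hGon, hGIpos, ?_⟩
  · have h2 : (fun b => ∫ θh : ℝ, joint θh b) = fun b => K * mvGauss Sb μb b :=
      funext inner_full
    rw [h2]
    exact (hGint.const_mul K).integrableOn
  · simp_rw [inner_full]
    rw [integral_const_mul]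
    exact mul_pos hK hGIpos
  · intro x
    simp_rw [inner_full, inner_Iic x]
    rw [integral_const_mul, integral_const_mul,
      mul_div_mul_left _ _ hK.ne']
end

section
/- Let X ∈ ℝ^{n×p} with XᵀX positive definite, let M ⊆ {1,…,p} with |M| = d, let J_M ∈ ℝ^{d×p} consist of the rows of the identity matrix I_p with indices in M, and set X_M = X J_Mᵀ; assume X_MᵀX_M is positive definite. Let σ² > 0, κ > 0, let D ∈ ℝ^{d×d} be diagonal with diagonal entries in {−1, +1}, let Σ = σ²(X_MᵀX_M)⁻¹, let η ∈ ℝ^d be nonzero, ν = ηᵀΣη, c̃ = D(ν⁻¹Ση), Ω = κ⁻¹σ²XᵀX, Q₂ = XᵀX_M D, and H = Q₂ᵀΩ⁻¹Q₂. Then: (i) Q₂ᵀΩ⁻¹t = (κ/σ²)·D(J_M t) for every t ∈ ℝ^p; (ii) H = (κ/σ²)·D X_MᵀX_M D; and (iii) (ν⁻¹ + c̃ᵀHc̃)⁻¹ = ν/(1+κ). -/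
open Matrix

theorem stmt2 (n p d : ℕ) (hn : 1 ≤ n) (hp : 1 ≤ p) (hd : 1 ≤ d)
    (X : Matrix (Fin n) (Fin p) ℝ) (hX : (Xᵀ * X).PosDef)
    (M : Finset (Fin p)) (hMcard : M.card = d)
    (J : Matrix (Fin d) (Fin p) ℝ)
    (hJ : ∀ i j, J i j = if (M.orderIsoOfFin hMcard i : Fin p) = j then 1 else 0)
    (XM : Matrix (Fin n) (Fin d) ℝ) (hXM : XM = X * Jᵀ)
    (hXMpd : (XMᵀ * XM).PosDef)
    (σ2 κ : ℝ) (hσ2 : 0 < σ2) (hκ : 0 < κ)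
    (s : Fin d → ℝ) (hs : ∀ i, s i = 1 ∨ s i = -1)
    (D : Matrix (Fin d) (Fin d) ℝ) (hD : D = Matrix.diagonal s)
    (S : Matrix (Fin d) (Fin d) ℝ) (hS : S = σ2 • (XMᵀ * XM)⁻¹)
    (η : Fin d → ℝ) (hη : η ≠ 0)
    (ν : ℝ) (hν : ν = η ⬝ᵥ (S *ᵥ η))
    (c : Fin d → ℝ) (hc : c = D *ᵥ (ν⁻¹ • (S *ᵥ η)))
    (Ω : Matrix (Fin p) (Fin p) ℝ) (hΩ : Ω = κ⁻¹ • (σ2 • (Xᵀ * X)))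
    (Q₂ : Matrix (Fin p) (Fin d) ℝ) (hQ₂ : Q₂ = Xᵀ * XM * D)
    (H : Matrix (Fin d) (Fin d) ℝ) (hH : H = Q₂ᵀ * Ω⁻¹ * Q₂) :
    (∀ t : Fin p → ℝ, (Q₂ᵀ * Ω⁻¹) *ᵥ t = (κ / σ2) • (D *ᵥ (J *ᵥ t))) ∧
    H = (κ / σ2) • (D * (XMᵀ * XM) * D) ∧
    (ν⁻¹ + c ⬝ᵥ (H *ᵥ c))⁻¹ = ν / (1 + κ) := by
  have hAinv : (Xᵀ * X) * (Xᵀ * X)⁻¹ = 1 :=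
    Matrix.mul_nonsing_inv _ hX.det_pos.ne'.isUnit
  have hBinv : (XMᵀ * XM) * (XMᵀ * XM)⁻¹ = 1 :=
    Matrix.mul_nonsing_inv _ hXMpd.det_pos.ne'.isUnit
  have hDt : Dᵀ = D := by rw [hD]; exact Matrix.diagonal_transpose s
  have hDD : D * D = 1 := by
    rw [hD, Matrix.diagonal_mul_diagonal,
      show (fun i => s i * s i) = fun _ => (1:ℝ) from funext fun i => by
        rcases hs i with h | h <;> simp [h]]
    exact Matrix.diagonal_one
  have hXMt : XMᵀ = J * Xᵀ := by
    rw [hXM, Matrix.transpose_mul, Matrix.transpose_transpose]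
  have hΩinv : Ω⁻¹ = (κ / σ2) • (Xᵀ * X)⁻¹ := by
    apply Matrix.inv_eq_right_inv
    rw [hΩ, smul_smul, Matrix.smul_mul, Matrix.mul_smul, hAinv, smul_smul]
    have : κ⁻¹ * σ2 * (κ / σ2) = 1 := by field_simp
    rw [this, one_smul]
  have hQt : Q₂ᵀ * Ω⁻¹ = (κ / σ2) • (D * J) := by
    rw [hQ₂, hΩinv]
    simp only [Matrix.transpose_mul, Matrix.transpose_transpose, hDt, hXMt]
    rw [Matrix.mul_smul]
    congr 1
    calc D * (J * Xᵀ * X) * (Xᵀ * X)⁻¹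
        = D * J * (Xᵀ * X * (Xᵀ * X)⁻¹) := by simp only [Matrix.mul_assoc]
      _ = D * J := by rw [hAinv, Matrix.mul_one]
  have part1 : ∀ t : Fin p → ℝ, (Q₂ᵀ * Ω⁻¹) *ᵥ t = (κ / σ2) • (D *ᵥ (J *ᵥ t)) := by
    intro t
    rw [hQt, Matrix.smul_mulVec, Matrix.mulVec_mulVec]
  have part2 : H = (κ / σ2) • (D * (XMᵀ * XM) * D) := by
    rw [hH, hQt, hQ₂, Matrix.smul_mul]
    congr 1
    calc D * J * (Xᵀ * XM * D) = D * (J * Xᵀ) * XM * D := by simp only [Matrix.mul_assoc]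
      _ = D * (XMᵀ * XM) * D := by rw [← hXMt, Matrix.mul_assoc D XMᵀ XM]
  refine ⟨part1, part2, ?_⟩
  have hνpos : 0 < ν := by
    have h := hXMpd.inv.dotProduct_mulVec_pos hη
    simp only [star_trivial] at h
    rw [hν, hS, Matrix.smul_mulVec, dotProduct_smul, smul_eq_mul]
    exact mul_pos hσ2 h
  have hν0 : ν ≠ 0 := hνpos.ne'
  have hBS : (XMᵀ * XM) * S = σ2 • (1 : Matrix (Fin d) (Fin d) ℝ) := by
    rw [hS, Matrix.mul_smul, hBinv]
  have hc' : c = ν⁻¹ • ((D * S) *ᵥ η) := by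
    rw [hc, Matrix.mulVec_smul, Matrix.mulVec_mulVec]
  have hHc : H *ᵥ c = (κ * ν⁻¹) • (D *ᵥ η) := by
    have hmat : D * (XMᵀ * XM) * D * (D * S) = σ2 • D := by
      calc D * (XMᵀ * XM) * D * (D * S)
          = D * (XMᵀ * XM) * (D * D) * S := by simp only [Matrix.mul_assoc]
        _ = D * (XMᵀ * XM * S) := by rw [hDD, Matrix.mul_one, Matrix.mul_assoc]
        _ = σ2 • D := by rw [hBS, Matrix.mul_smul, Matrix.mul_one]
    rw [part2, hc', Matrix.mulVec_smul, Matrix.smul_mulVec, Matrix.mulVec_mulVec,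
      hmat, Matrix.smul_mulVec, smul_smul, smul_smul]
    congr 1
    field_simp
  have hDsym : ∀ x y : Fin d → ℝ, (D *ᵥ x) ⬝ᵥ (D *ᵥ y) = x ⬝ᵥ y := by
    intro x y
    rw [Matrix.dotProduct_mulVec, ← Matrix.mulVec_transpose, Matrix.mulVec_mulVec,
      hDt, hDD, Matrix.one_mulVec]
  have hdot : ((D * S) *ᵥ η) ⬝ᵥ (D *ᵥ η) = ν := by
    rw [← Matrix.mulVec_mulVec, hDsym, dotProduct_comm, ← hν]
  have hkey : c ⬝ᵥ (H *ᵥ c) = κ / ν := by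
    rw [hHc, hc', smul_dotProduct, dotProduct_smul, hdot, smul_eq_mul, smul_eq_mul]
    field_simp
  rw [hkey]
  have h1κ : (1 : ℝ) + κ ≠ 0 := by positivity
  rw [show ν⁻¹ + κ / ν = (1 + κ) / ν from by field_simp, inv_div]
end

section
/- Let d ≥ 1 and let Σ ∈ ℝ^{d×d} be positive definite. For μ ∈ ℝ^d define h(μ) = ∫_O φ(b; μ, Σ) db and μ̃(μ) = (1/h(μ)) ∫_O b · φ(b; μ, Σ) db (the mean of the Gaussian N(μ, Σ) truncated to O). Then h(μ) > 0 for all μ, the function μ ↦ log h(μ) is differentiable on ℝ^d, and its gradient is ∇_μ log h(μ) = Σ⁻¹(μ̃(μ) − μ). -/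
open MeasureTheory Matrix Real Set

section Aux

lemma posdef_lower {d : ℕ} (hd : 1 ≤ d) (A : Matrix (Fin d) (Fin d) ℝ) (hA : A.PosDef) :
    ∃ c > 0, ∀ y : Fin d → ℝ, c * (∑ i, (y i)^2) ≤ y ⬝ᵥ (A *ᵥ y) := by
  have hApos : ∀ y : Fin d → ℝ, y ≠ 0 → 0 < y ⬝ᵥ (A *ᵥ y) := by
    intro y hy
    have := hA.re_dotProduct_pos (x := y) hy
    simpa using this
  have hQcont : Continuous fun y : Fin d → ℝ => y ⬝ᵥ (A *ᵥ y) := by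
    simp only [dotProduct, Matrix.mulVec]
    fun_prop
  have hNcont : Continuous fun y : Fin d → ℝ => ∑ i, (y i)^2 := by fun_prop
  set Sp : Set (Fin d → ℝ) := {y | ∑ i, (y i)^2 = 1} with hSp
  have hclosed : IsClosed Sp := isClosed_eq hNcont continuous_const
  have hbdd : Sp ⊆ Metric.closedBall 0 1 := by
    intro y hy
    simp only [Metric.mem_closedBall, dist_zero_right]
    rw [pi_norm_le_iff_of_nonneg (by norm_num)]
    intro i
    have h1 : (y i)^2 ≤ 1 := by
      rw [← hy]
      exact Finset.single_le_sum (f := fun i => (y i)^2) (fun j _ => sq_nonneg _)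
        (Finset.mem_univ i)
    rw [Real.norm_eq_abs]
    exact abs_le_of_sq_le_sq (by simpa using h1) (by norm_num)
  have hcpt : IsCompact Sp :=
    (isCompact_closedBall (0 : Fin d → ℝ) 1).of_isClosed_subset hclosed hbdd
  have i0 : Fin d := ⟨0, hd⟩
  have hne : Sp.Nonempty := by
    refine ⟨fun i => if i = i0 then 1 else 0, ?_⟩
    simp [hSp, apply_ite, Finset.sum_ite_eq']
  obtain ⟨y₀, hy₀, hmin⟩ := hcpt.exists_isMinOn hne hQcont.continuousOn
  have hy₀ne : y₀ ≠ 0 := by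
    intro h
    rw [h] at hy₀
    simp [hSp] at hy₀
  refine ⟨y₀ ⬝ᵥ (A *ᵥ y₀), hApos _ hy₀ne, fun y => ?_⟩
  rcases eq_or_ne y 0 with rfl | hy
  · simp
  · set t : ℝ := Real.sqrt (∑ i, (y i)^2) with ht
    have hNpos : 0 < ∑ i, (y i)^2 := by
      rcases Function.ne_iff.1 hy with ⟨i, hi⟩
      have : 0 < (y i)^2 := pow_pos (abs_pos.mpr hi) 2 |>.trans_eq (by rw [sq_abs])
      exact lt_of_lt_of_le this (Finset.single_le_sum (f := fun i => (y i)^2)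
        (fun j _ => sq_nonneg _) (Finset.mem_univ i))
    have htpos : 0 < t := Real.sqrt_pos.2 hNpos
    have ht2 : t^2 = ∑ i, (y i)^2 := Real.sq_sqrt hNpos.le
    set u : (Fin d → ℝ) := t⁻¹ • y with hu
    have huS : u ∈ Sp := by
      simp only [hSp, mem_setOf_eq, hu, Pi.smul_apply, smul_eq_mul, mul_pow, ← Finset.mul_sum]
      rw [← ht2]
      field_simp
    have hyu : y = t • u := by
      rw [hu, smul_smul, mul_inv_cancel₀ htpos.ne', one_smul]
    have hscale : y ⬝ᵥ (A *ᵥ y) = t^2 * (u ⬝ᵥ (A *ᵥ u)) := by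
      rw [hyu]
      simp [Matrix.mulVec_smul, smul_dotProduct, dotProduct_smul, smul_eq_mul]
      ring
    rw [hscale, ← ht2]
    have huQ : y₀ ⬝ᵥ A *ᵥ y₀ ≤ u ⬝ᵥ A *ᵥ u := hmin huS
    nlinarith [sq_nonneg t, htpos]

lemma int_exp_shift {a s : ℝ} (ha : 0 < a) :
    Integrable (fun t : ℝ => Real.exp (-a * (t - s)^2)) :=
  (integrable_exp_neg_mul_sq ha).comp_sub_right s

lemma int_abs_exp_shift {a s : ℝ} (ha : 0 < a) :
    Integrable (fun t : ℝ => |t| * Real.exp (-a * (t - s)^2)) := by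
  have h1 : Integrable (fun t : ℝ => |t - s| * Real.exp (-a * (t - s)^2)) := by
    have := ((integrable_mul_exp_neg_mul_sq ha).abs).comp_sub_right s
    refine this.congr (ae_of_all _ fun t => ?_)
    simp only
    rw [abs_mul, abs_of_pos (Real.exp_pos _)]
  have h2 : Integrable (fun t : ℝ => |s| * Real.exp (-a * (t - s)^2)) :=
    (int_exp_shift ha).const_mul _
  refine (h1.add h2).mono' ?_ (ae_of_all _ fun t => ?_)
  · exact (continuous_abs.mul (by fun_prop)).aestronglyMeasurable
  · simp only [Pi.add_apply, Real.norm_eq_abs, abs_mul, abs_abs,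
      abs_of_pos (Real.exp_pos _)]
    have : |t| ≤ |t - s| + |s| := by
      calc |t| = |t - s + s| := by ring_nf
      _ ≤ |t - s| + |s| := abs_add_le _ _
    nlinarith [Real.exp_pos (-a * (t - s)^2), abs_nonneg (t - s), abs_nonneg s, abs_nonneg t]

lemma int_prod_exp {d : ℕ} {a : ℝ} (ha : 0 < a) (s : Fin d → ℝ) :
    Integrable (fun b : Fin d → ℝ => ∏ i, Real.exp (-a * (b i - s i)^2)) :=
  Integrable.fintype_prod_dep (ι := Fin d) (E := fun _ => ℝ)
    (f := fun i t => Real.exp (-a * (t - s i)^2)) (fun i => int_exp_shift ha)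

lemma int_prod_exp_abs {d : ℕ} {a : ℝ} (ha : 0 < a) (s : Fin d → ℝ) (k : Fin d) :
    Integrable (fun b : Fin d → ℝ => |b k| * ∏ i, Real.exp (-a * (b i - s i)^2)) := by
  have := Integrable.fintype_prod_dep (ι := Fin d) (E := fun _ => ℝ) (μ := fun _ => volume)
    (f := fun i t => (if i = k then |t| else 1) * Real.exp (-a * (t - s i)^2))
    (fun i => by
      rcases eq_or_ne i k with h | h
      · subst h
        simpa using int_abs_exp_shift (s := s i) ha
      · simpa [h] using int_exp_shift (s := s i) ha)
  refine this.congr (ae_of_all _ fun b => ?_)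
  simp only
  rw [Finset.prod_mul_distrib]
  congr 1
  rw [Finset.prod_ite_eq' Finset.univ k (fun i => |b i|)]
  simp

noncomputable def dp {d : ℕ} (w : Fin d → ℝ) : (Fin d → ℝ) →L[ℝ] ℝ :=
  ∑ i, w i • ContinuousLinearMap.proj i

lemma dp_apply {d : ℕ} (w v : Fin d → ℝ) : dp w v = w ⬝ᵥ v := by
  simp [dp, dotProduct, ContinuousLinearMap.sum_apply]

noncomputable def Tmap {d : ℕ} (A : Matrix (Fin d) (Fin d) ℝ) :
    (Fin d → ℝ) →L[ℝ] ((Fin d → ℝ) →L[ℝ] ℝ) :=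
  LinearMap.toContinuousLinearMap
    { toFun := fun y => dp (A *ᵥ y)
      map_add' := by
        intro y z
        ext v
        simp [dp_apply, Matrix.mulVec_add, add_dotProduct]
      map_smul' := by
        intro c y
        ext v
        simp [dp_apply, Matrix.mulVec_smul, smul_dotProduct] }

lemma Tmap_apply {d : ℕ} (A : Matrix (Fin d) (Fin d) ℝ) (y : Fin d → ℝ) :
    Tmap A y = dp (A *ᵥ y) := rfl

lemma hasFDerivAt_mvGauss {d : ℕ} (S : Matrix (Fin d) (Fin d) ℝ) (hS : S.PosDef)
    (b m : Fin d → ℝ) :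
    HasFDerivAt (fun m => mvGauss S m b)
      (mvGauss S m b • dp (S⁻¹ *ᵥ (b - m))) m := by
  set A := S⁻¹ with hA
  have hsym : ∀ i j, A i j = A j i := by
    intro i j
    have := (hS.inv).isHermitian
    calc A i j = Aᴴ i j := by rw [this]
    _ = A j i := by simp [Matrix.conjTranspose_apply]
  have h1 : ∀ i, HasFDerivAt (fun m : Fin d → ℝ => b i - m i)
      (-(ContinuousLinearMap.proj i : (Fin d → ℝ) →L[ℝ] ℝ)) m :=
    fun i => (hasFDerivAt_apply i m).const_sub (b i)
  have h2 : ∀ i, HasFDerivAt (fun m : Fin d → ℝ => ∑ j, A i j * (b j - m j))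
      (∑ j, A i j • -(ContinuousLinearMap.proj j : (Fin d → ℝ) →L[ℝ] ℝ)) m :=
    fun i => HasFDerivAt.fun_sum fun j _ => (h1 j).const_mul (A i j)
  have h4 : HasFDerivAt (fun m : Fin d → ℝ => ∑ i, (b i - m i) * ∑ j, A i j * (b j - m j))
      (∑ i, ((b i - m i) • (∑ j, A i j • -(ContinuousLinearMap.proj j : (Fin d → ℝ) →L[ℝ] ℝ))
        + (∑ j, A i j * (b j - m j)) •
          -(ContinuousLinearMap.proj i : (Fin d → ℝ) →L[ℝ] ℝ))) m :=
    HasFDerivAt.fun_sum fun i _ => (h1 i).mul (h2 i)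
  have h5 := ((h4.const_mul (-(1/2 : ℝ))).exp).const_mul
    ((2 * π) ^ (-(d : ℝ) / 2) * S.det ^ (-(1 : ℝ) / 2))
  have key : (fun m : Fin d → ℝ => (2 * π) ^ (-(d : ℝ) / 2) * S.det ^ (-(1 : ℝ) / 2) *
      Real.exp (-(1/2 : ℝ) * ∑ i, (b i - m i) * ∑ j, A i j * (b j - m j)))
      = fun m => mvGauss S m b := by
    funext m
    simp [mvGauss, dotProduct, Matrix.mulVec, ← hA]
  rw [key] at h5
  refine h5.congr_fderiv ?_
  ext v
  simp only [ContinuousLinearMap.smul_apply, ContinuousLinearMap.sum_apply,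
    ContinuousLinearMap.add_apply, ContinuousLinearMap.neg_apply, ContinuousLinearMap.proj_apply,
    smul_eq_mul, dp_apply, dotProduct, Matrix.mulVec, Pi.sub_apply]
  have swap : ∑ i, (b i - m i) * ∑ j, A i j * (-v j)
      = -∑ i, ((∑ j, A i j * (b j - m j)) * v i) := by
    rw [← Finset.sum_neg_distrib]
    simp_rw [Finset.mul_sum]
    rw [Finset.sum_comm]
    refine Finset.sum_congr rfl fun i _ => ?_
    calc ∑ x, (b x - m x) * (A x i * -v i)
        = ∑ x, -(A i x * (b x - m x) * v i) :=
          Finset.sum_congr rfl fun x _ => by rw [hsym x i]; ring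
      _ = -((∑ j, A i j * (b j - m j)) * v i) := by
          rw [Finset.sum_neg_distrib, ← Finset.sum_mul]
  have sw2 : ∑ i, (∑ j, A i j * (b j - m j)) * (-(v i))
      = -∑ i, ((∑ j, A i j * (b j - m j)) * v i) := by
    rw [← Finset.sum_neg_distrib]
    exact Finset.sum_congr rfl fun i _ => by ring
  have hg : mvGauss S m b = (2 * π) ^ (-(d:ℝ)/2) * S.det ^ (-(1:ℝ)/2) *
      Real.exp (-(1/2 : ℝ) * ∑ i, (b i - m i) * ∑ j, A i j * (b j - m j)) := by
    simp [mvGauss, dotProduct, Matrix.mulVec, ← hA]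
  rw [Finset.sum_add_distrib, swap, sw2, hg]
  ring

lemma cont_mvGauss {d : ℕ} (S : Matrix (Fin d) (Fin d) ℝ) (m : Fin d → ℝ) :
    Continuous fun b => mvGauss S m b := by
  unfold mvGauss
  simp only [dotProduct, Matrix.mulVec]
  fun_prop

end Aux

set_option maxHeartbeats 1000000 in
theorem stmt5 (d : ℕ) (hd : 1 ≤ d)
    (S : Matrix (Fin d) (Fin d) ℝ) (hS : S.PosDef)
    (h : (Fin d → ℝ) → ℝ)
    (hh : ∀ μ, h μ = ∫ b in posOrthant d, mvGauss S μ b)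
    (μtil : (Fin d → ℝ) → (Fin d → ℝ))
    (hμtil : ∀ μ, μtil μ = (h μ)⁻¹ • ∫ b in posOrthant d, mvGauss S μ b • b) :
    (∀ μ, 0 < h μ) ∧
    ∀ μ : Fin d → ℝ, ∃ L : (Fin d → ℝ) →L[ℝ] ℝ,
      HasFDerivAt (fun m => Real.log (h m)) L μ ∧
      ∀ v : Fin d → ℝ, L v = (S⁻¹ *ᵥ (μtil μ - μ)) ⬝ᵥ v := by
  set A := S⁻¹ with hAdef
  have hApd : A.PosDef := hS.inv
  obtain ⟨c, hc, hq⟩ := posdef_lower hd A hApd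
  set C : ℝ := (2 * π) ^ (-(d : ℝ) / 2) * S.det ^ (-(1 : ℝ) / 2) with hCdef
  have hCpos : 0 < C := mul_pos (Real.rpow_pos_of_pos (by positivity) _)
    (Real.rpow_pos_of_pos hS.det_pos _)
  have hfpos : ∀ m b : Fin d → ℝ, 0 < mvGauss S m b := fun m b =>
    mul_pos hCpos (Real.exp_pos _)
  -- pointwise Gaussian upper bound, m arbitrary
  have gbound : ∀ m b : Fin d → ℝ,
      mvGauss S m b ≤ C * ∏ i, Real.exp (-(c/2) * (b i - m i)^2) := by
    intro m b
    have h1 : c * (∑ i, ((b - m) i)^2) ≤ (b - m) ⬝ᵥ (A *ᵥ (b - m)) := hq (b - m)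
    have h2 : -(1/2 : ℝ) * ((b - m) ⬝ᵥ (A *ᵥ (b - m))) ≤ ∑ i, (-(c/2) * (b i - m i)^2) := by
      have : ∑ i, (-(c/2) * (b i - m i)^2) = -(1/2) * (c * ∑ i, ((b - m) i)^2) := by
        rw [Finset.mul_sum, Finset.mul_sum]
        exact Finset.sum_congr rfl fun i _ => by simp [Pi.sub_apply]; ring
      rw [this]
      nlinarith
    calc mvGauss S m b = C * Real.exp (-(1/2 : ℝ) * ((b - m) ⬝ᵥ (A *ᵥ (b - m)))) := rfl
    _ ≤ C * Real.exp (∑ i, (-(c/2) * (b i - m i)^2)) := by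
        exact mul_le_mul_of_nonneg_left (Real.exp_le_exp.2 h2) hCpos.le
    _ = C * ∏ i, Real.exp (-(c/2) * (b i - m i)^2) := by rw [Real.exp_sum]
  -- measurability / openness of the orthant
  have hOopen : IsOpen (posOrthant d) := by
    have : posOrthant d = ⋂ i, {v : Fin d → ℝ | 0 < v i} := by
      ext v; simp [posOrthant]
    rw [this]
    exact isOpen_iInter_of_finite fun i => isOpen_lt continuous_const (continuous_apply i)
  have hOne : (posOrthant d).Nonempty := ⟨fun _ => 1, fun i => one_pos⟩
  set ν : Measure (Fin d → ℝ) := volume.restrict (posOrthant d) with hν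
  -- integrability of the density
  have If : ∀ m, Integrable (fun b => mvGauss S m b) ν := by
    intro m
    refine (((int_prod_exp (by positivity : (0:ℝ) < c/2) m).const_mul C).restrict).mono'
      ((cont_mvGauss S m).aestronglyMeasurable) (ae_of_all _ fun b => ?_)
    rw [Real.norm_eq_abs, abs_of_pos (hfpos m b)]
    exact gbound m b
  -- positivity of h
  have hpos : ∀ μ, 0 < h μ := by
    intro μ
    rw [hh]
    refine (setIntegral_pos_iff_support_of_nonneg_ae ?_ ?_).2 ?_
    · exact ae_of_all _ fun b => (hfpos μ b).le
    · exact If μ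
    · have hsupp : Function.support (fun b => mvGauss S μ b) = univ :=
        Set.eq_univ_of_forall fun b => Function.mem_support.2 (hfpos μ b).ne'
      rw [hsupp, univ_inter]
      exact hOopen.measure_pos volume hOne
  have normsum : ∀ b : Fin d → ℝ, ‖b‖ ≤ ∑ i, |b i| := by
    intro b
    rw [pi_norm_le_iff_of_nonneg (Finset.sum_nonneg fun i _ => abs_nonneg _)]
    intro i
    rw [Real.norm_eq_abs]
    exact Finset.single_le_sum (f := fun i => |b i|) (fun j _ => abs_nonneg _) (Finset.mem_univ i)
  -- integrability of b ↦ mvGauss μ b • b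
  have Ifb : ∀ m, Integrable (fun b => mvGauss S m b • b) ν := by
    intro m
    have hint : Integrable (fun b : Fin d → ℝ =>
        ∑ k, C * (|b k| * ∏ i, Real.exp (-(c/2) * (b i - m i)^2))) ν := by
      refine (integrable_finset_sum _ fun k _ => ?_).restrict
      exact ((int_prod_exp_abs (by positivity : (0:ℝ) < c/2) m k).const_mul C).congr
        (ae_of_all _ fun b => by ring)
    refine hint.mono' ?_ (ae_of_all _ fun b => ?_)
    · exact ((cont_mvGauss S m).smul continuous_id).aestronglyMeasurable
    · rw [norm_smul, Real.norm_eq_abs, abs_of_pos (hfpos m b)]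
      have h1 : mvGauss S m b * ‖b‖ ≤ (C * ∏ i, Real.exp (-(c/2) * (b i - m i)^2)) *
          ∑ i, |b i| := by
        refine mul_le_mul (gbound m b) (normsum b) (norm_nonneg _) ?_
        positivity
      refine h1.trans (le_of_eq ?_)
      rw [Finset.mul_sum]
      exact Finset.sum_congr rfl fun k _ => by ring
  refine ⟨hpos, fun μ => ?_⟩
  set M : ℝ := ‖μ‖ + 1 with hMdef
  set Kc : ℝ := ‖Tmap A‖ * (C * (Real.exp (c/2))^d) with hKcdef
  set P : (Fin d → ℝ) → ℝ := fun b => ∏ i, Real.exp (-(c/4) * (b i - μ i)^2) with hPdef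
  have hPpos : ∀ b, 0 < P b := fun b => Finset.prod_pos fun i _ => Real.exp_pos _
  set F' : (Fin d → ℝ) → (Fin d → ℝ) → (Fin d → ℝ) →L[ℝ] ℝ :=
    fun m b => mvGauss S m b • dp (A *ᵥ (b - m)) with hF'def
  have F'eq : ∀ m b, F' m b = Tmap A (mvGauss S m b • (b - m)) := by
    intro m b
    rw [hF'def]
    simp only [_root_.map_smul, Tmap_apply]
  -- uniform Gaussian bound on the ball
  have gb2 : ∀ m ∈ Metric.ball μ 1, ∀ b, mvGauss S m b ≤ C * (Real.exp (c/2))^d * P b := by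
    intro m hm b
    refine (gbound m b).trans ?_
    have hfac : ∀ i, Real.exp (-(c/2) * (b i - m i)^2) ≤
        Real.exp (c/2) * Real.exp (-(c/4) * (b i - μ i)^2) := by
      intro i
      rw [← Real.exp_add, Real.exp_le_exp]
      have hmi : |m i - μ i| ≤ 1 := by
        have h1 : ‖m - μ‖ < 1 := by
          have := Metric.mem_ball.1 hm
          rwa [dist_eq_norm] at this
        have h2 : |m i - μ i| ≤ ‖m - μ‖ := by
          have := norm_le_pi_norm (m - μ) i
          simpa [Real.norm_eq_abs] using this
        linarith
      have hsq : (m i - μ i)^2 ≤ 1 := by nlinarith [abs_nonneg (m i - μ i), sq_abs (m i - μ i)]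
      nlinarith [sq_nonneg (b i - m i), sq_nonneg ((b i - μ i) - (m i - μ i)),
        sq_nonneg ((b i - m i) - (m i - μ i)), sq_nonneg (b i - μ i)]
    calc C * ∏ i, Real.exp (-(c/2) * (b i - m i)^2)
        ≤ C * ∏ i, (Real.exp (c/2) * Real.exp (-(c/4) * (b i - μ i)^2)) := by
          refine mul_le_mul_of_nonneg_left ?_ hCpos.le
          exact Finset.prod_le_prod (fun i _ => (Real.exp_pos _).le) (fun i _ => hfac i)
      _ = C * (Real.exp (c/2))^d * P b := by
          rw [Finset.prod_mul_distrib, Finset.prod_const, Finset.card_univ, Fintype.card_fin]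
          ring
  set bound : (Fin d → ℝ) → ℝ :=
    fun b => ∑ k, Kc * (|b k| * P b) + (Kc * M) * P b with hbdef
  have bound_int : Integrable bound ν := by
    refine Integrable.add ?_ ?_
    · refine (integrable_finset_sum _ fun k _ => ?_).restrict
      exact ((int_prod_exp_abs (by positivity : (0:ℝ) < c/4) μ k).const_mul Kc).congr
        (ae_of_all _ fun b => by rw [hPdef])
    · exact (((int_prod_exp (by positivity : (0:ℝ) < c/4) μ).const_mul (Kc * M)).restrict)
  have h_bound : ∀ b, ∀ m ∈ Metric.ball μ 1, ‖F' m b‖ ≤ bound b := by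
    intro b m hm
    have hTn : ‖F' m b‖ ≤ ‖Tmap A‖ * (mvGauss S m b * ‖b - m‖) := by
      rw [F'eq]
      refine ((Tmap A).le_opNorm _).trans (le_of_eq ?_)
      rw [norm_smul, Real.norm_eq_abs, abs_of_pos (hfpos m b)]
    have hbm : ‖b - m‖ ≤ (∑ i, |b i|) + M := by
      have h1 : ‖b - m‖ ≤ ‖b‖ + ‖m‖ := norm_sub_le _ _
      have h2 : ‖m‖ ≤ ‖μ‖ + 1 := by
        have h3 : ‖m - μ‖ < 1 := by
          have := Metric.mem_ball.1 hm
          rwa [dist_eq_norm] at this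
        calc ‖m‖ = ‖m - μ + μ‖ := by ring_nf
        _ ≤ ‖m - μ‖ + ‖μ‖ := norm_add_le _ _
        _ ≤ ‖μ‖ + 1 := by linarith
      calc ‖b - m‖ ≤ ‖b‖ + ‖m‖ := h1
      _ ≤ (∑ i, |b i|) + M := by
          rw [hMdef]
          have := normsum b
          linarith
    have key : ‖F' m b‖ ≤ Kc * (((∑ i, |b i|) + M) * P b) := by
      refine hTn.trans ?_
      rw [hKcdef]
      rw [mul_assoc ‖Tmap A‖]
      refine mul_le_mul_of_nonneg_left ?_ (norm_nonneg (Tmap A))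
      calc mvGauss S m b * ‖b - m‖
          ≤ (C * (Real.exp (c/2))^d * P b) * ((∑ i, |b i|) + M) := by
            refine mul_le_mul (gb2 m hm b) hbm (norm_nonneg _) ?_
            positivity
        _ = C * (Real.exp (c/2))^d * (((∑ i, |b i|) + M) * P b) := by ring
    refine key.trans (le_of_eq ?_)
    rw [hbdef]
    simp only
    have hsum : ∑ k, Kc * (|b k| * P b) = Kc * ((∑ k, |b k|) * P b) := by
      rw [Finset.sum_mul, Finset.mul_sum]
    rw [hsum]
    ring
  have hdom : HasFDerivAt (fun m => ∫ b, mvGauss S m b ∂ν) (∫ b, F' μ b ∂ν) μ := by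
    refine hasFDerivAt_integral_of_dominated_of_fderiv_le (F := fun m b => mvGauss S m b)
      (F' := F') (bound := bound) (Metric.ball_mem_nhds μ one_pos) ?_ (If μ) ?_ ?_ bound_int ?_
    · exact Filter.Eventually.of_forall fun m => (cont_mvGauss S m).aestronglyMeasurable
    · have hcF' : Continuous fun b => F' μ b := by
        have heq : (fun b => F' μ b) = fun b => Tmap A (mvGauss S μ b • (b - μ)) :=
          funext fun b => F'eq μ b
        rw [heq]
        exact (Tmap A).continuous.comp
          ((cont_mvGauss S μ).smul (continuous_id.sub continuous_const))
      exact hcF'.aestronglyMeasurable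
    · exact ae_of_all _ fun b m hm => h_bound b m hm
    · exact ae_of_all _ fun b m hm => hasFDerivAt_mvGauss S hS b m
  have hG : Integrable (fun b => mvGauss S μ b • (b - μ)) ν := by
    have hsub := (Ifb μ).sub ((If μ).smul_const μ)
    refine hsub.congr (ae_of_all _ fun b => ?_)
    simp [smul_sub]
  have hGval : ∫ b, mvGauss S μ b • (b - μ) ∂ν = h μ • (μtil μ - μ) := by
    have h2 : (fun b => mvGauss S μ b • (b - μ))
        = fun b => mvGauss S μ b • b - mvGauss S μ b • μ :=
      funext fun b => smul_sub _ _ _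
    rw [h2, integral_sub (Ifb μ) ((If μ).smul_const μ), integral_smul_const, ← hh μ]
    have h3 : ∫ b, mvGauss S μ b • b ∂ν = h μ • μtil μ := by
      rw [hμtil μ, smul_inv_smul₀ (hpos μ).ne']
    rw [h3, smul_sub]
  have hint_eq : (∫ b, F' μ b ∂ν) = h μ • Tmap A (μtil μ - μ) := by
    have h1 : (fun b => F' μ b) = fun b => Tmap A (mvGauss S μ b • (b - μ)) :=
      funext fun b => F'eq μ b
    rw [h1, (Tmap A).integral_comp_comm hG, hGval, _root_.map_smul]
  have hH : HasFDerivAt h (h μ • Tmap A (μtil μ - μ)) μ := by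
    have heq : (fun m => ∫ b, mvGauss S m b ∂ν) = h := funext fun m => (hh m).symm
    rw [heq, hint_eq] at hdom
    exact hdom
  have hlog := hH.log (hpos μ).ne'
  refine ⟨(h μ)⁻¹ • (h μ • Tmap A (μtil μ - μ)), hlog, fun v => ?_⟩
  simp only [ContinuousLinearMap.smul_apply, Tmap_apply, dp_apply, smul_eq_mul]
  rw [← mul_assoc, inv_mul_cancel₀ (hpos μ).ne', one_mul]
end

section
/- Let d ≥ 1, let Σ, H ∈ ℝ^{d×d} be positive definite, let D ∈ ℝ^{d×d} be diagonal with diagonal entries in {−1, +1}, let Σ_b = H⁻¹ + DΣD, and let M ∈ ℝ^{d×d} be symmetric positive semidefinite. Then the matrix Σ⁻¹ + D(Σ_b⁻¹ M Σ_b⁻¹ − Σ_b⁻¹)D is positive definite. -/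
open Matrix

lemma posdef_conj {d : ℕ} {A : Matrix (Fin d) (Fin d) ℝ} (hA : A.PosDef)
    (C : Matrix (Fin d) (Fin d) ℝ) (hC : IsUnit C) :
    (Cᴴ * A * C).PosDef := by
  refine PosDef.of_dotProduct_mulVec_pos (hA.posSemidef.conjTranspose_mul_mul_same C).1 fun x hx => ?_
  have hx' : C *ᵥ x ≠ 0 := by
    intro h
    exact hx ((Matrix.mulVec_injective_iff_isUnit.mpr hC).eq_iff.mp (by simp [h]))
  simpa only [star_mulVec, dotProduct_mulVec, vecMul_vecMul] using hA.dotProduct_mulVec_pos hx'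

theorem stmt9 (d : ℕ) (hd : 1 ≤ d)
    (S H : Matrix (Fin d) (Fin d) ℝ) (hS : S.PosDef) (hH : H.PosDef)
    (s : Fin d → ℝ) (hs : ∀ i, s i = 1 ∨ s i = -1)
    (D : Matrix (Fin d) (Fin d) ℝ) (hD : D = Matrix.diagonal s)
    (Sb : Matrix (Fin d) (Fin d) ℝ) (hSb : Sb = H⁻¹ + D * S * D)
    (M : Matrix (Fin d) (Fin d) ℝ) (hM : M.PosSemidef) :
    (S⁻¹ + D * (Sb⁻¹ * M * Sb⁻¹ - Sb⁻¹) * D).PosDef := by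
  have hDD : D * D = 1 := by
    subst hD
    rw [Matrix.diagonal_mul_diagonal]
    have : (fun i => s i * s i) = fun _ => (1:ℝ) :=
      funext fun i => by rcases hs i with h | h <;> simp [h]
    rw [this, Matrix.diagonal_one]
  have hDu : IsUnit D := ⟨⟨D, D, hDD, hDD⟩, rfl⟩
  have hDH : Dᴴ = D := by
    rw [hD, Matrix.diagonal_conjTranspose]
    simp
  have hDinv : D⁻¹ = D := Matrix.inv_eq_right_inv hDD
  set E := D * S * D with hE
  have hEpd : E.PosDef := by
    have := posdef_conj hS D hDu
    rwa [hDH] at this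
  have hSbpd : Sb.PosDef := by
    rw [hSb]
    exact hH.inv.add hEpd
  have hCpd : (H + E⁻¹).PosDef := hH.add hEpd.inv
  have hEu : IsUnit E.det := hEpd.det_pos.ne'.isUnit
  have hHu : IsUnit H.det := hH.det_pos.ne'.isUnit
  have hCu : IsUnit (H + E⁻¹).det := hCpd.det_pos.ne'.isUnit
  -- Woodbury-type identity
  have h1 : Sb * E⁻¹ = H⁻¹ * (H + E⁻¹) := by
    rw [hSb, add_mul, Matrix.mul_nonsing_inv _ hEu, mul_add,
      Matrix.nonsing_inv_mul _ hHu, add_comm]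
  have key : Sb⁻¹ = E⁻¹ - E⁻¹ * (H + E⁻¹)⁻¹ * E⁻¹ := by
    apply Matrix.inv_eq_right_inv
    calc Sb * (E⁻¹ - E⁻¹ * (H + E⁻¹)⁻¹ * E⁻¹)
        = Sb * E⁻¹ - Sb * E⁻¹ * (H + E⁻¹)⁻¹ * E⁻¹ := by
          rw [mul_sub]; congr 1; rw [← mul_assoc, ← mul_assoc]
      _ = H⁻¹ * (H + E⁻¹) - H⁻¹ * (H + E⁻¹) * (H + E⁻¹)⁻¹ * E⁻¹ := by rw [h1]
      _ = H⁻¹ * (H + E⁻¹) - H⁻¹ * E⁻¹ := by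
          rw [mul_assoc H⁻¹ (H + E⁻¹) (H + E⁻¹)⁻¹, Matrix.mul_nonsing_inv _ hCu, mul_one]
      _ = 1 := by
          rw [mul_add, Matrix.nonsing_inv_mul _ hHu, add_sub_cancel_right]
  have hdiff : E⁻¹ - Sb⁻¹ = E⁻¹ * (H + E⁻¹)⁻¹ * E⁻¹ := by
    rw [key]; abel
  have hdiffpd : (E⁻¹ - Sb⁻¹).PosDef := by
    rw [hdiff]
    have := posdef_conj hCpd.inv E⁻¹ hEpd.inv.isUnit
    rwa [hEpd.inv.isHermitian.eq] at this
  -- E⁻¹ = D * S⁻¹ * D and D * E⁻¹ * D = S⁻¹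
  have hEinv : E⁻¹ = D * S⁻¹ * D := by
    rw [hE, Matrix.mul_inv_rev, Matrix.mul_inv_rev, hDinv, ← mul_assoc]
  have hDED : D * E⁻¹ * D = S⁻¹ := by
    rw [hEinv]
    calc D * (D * S⁻¹ * D) * D = (D * D) * S⁻¹ * (D * D) := by
          simp only [mul_assoc]
      _ = S⁻¹ := by rw [hDD]; simp
  -- conjugation by D
  have hmain : (D * (E⁻¹ - Sb⁻¹) * D).PosDef := by
    have := posdef_conj hdiffpd D hDu
    rwa [hDH] at this
  have hBH : (Sb⁻¹ * D)ᴴ = D * Sb⁻¹ := by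
    rw [Matrix.conjTranspose_mul, hDH, hSbpd.inv.isHermitian.eq]
  have hpsd : (D * Sb⁻¹ * M * (Sb⁻¹ * D)).PosSemidef := by
    have := hM.conjTranspose_mul_mul_same (Sb⁻¹ * D)
    rwa [hBH] at this
  have hsplit : S⁻¹ + D * (Sb⁻¹ * M * Sb⁻¹ - Sb⁻¹) * D
      = (D * (E⁻¹ - Sb⁻¹) * D) + (D * Sb⁻¹ * M * (Sb⁻¹ * D)) := by
    have : D * (E⁻¹ - Sb⁻¹) * D = S⁻¹ - D * Sb⁻¹ * D := by
      rw [mul_sub, sub_mul, hDED]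
    rw [this]
    noncomm_ring
  rw [hsplit]
  exact hmain.add_posSemidef hpsd
end
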